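/- arXiv:1011.6166 — 3 statements merged into one kernel-verified Lean document; each statement's English description precedes it below -/
import Mathlib

section
/- Let T be an interval exchange transformation of r ≥ 2 intervals of [0,1) with discontinuity points 0 = β_0 < β_1 < ⋯ < β_{r−1} < β_r = 1, satisfying the infinite distinct orbit condition and having balanced partition lengths with constant c > 0. Let f(x) = Σ_{i=0}^{r−1} (−c_i⁺ log{x − β_i}) + Σ_{i=0}^{r−1} (−c_{i+1}⁻ log{β_{i+1} − x}) with all c_i⁺, c_{i+1}⁻ > 0, and let f′ denote its pointwise derivative. Then for every 0 < η < 1 there exists δ > 0 such that for every j ≥ 6c² and every 0 ≤ i ≤ (r−1)j, the Lebesgue measure of the set {x ∈ Δ_i^j : |f′^{(j)}(x)| > δ j} is greater than η · d_i^j, where Δ_i^j is the i-th subinterval of the partition P_j and d_i^j is its length. -/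
open MeasureTheory Filter Set
open scoped ENNReal

def IsGap (S : Set ℝ) (a b : ℝ) : Prop :=
  a ∈ S ∧ b ∈ S ∧ a < b ∧ ∀ z ∈ S, z ≤ a ∨ b ≤ z

def partPts (r : ℕ) (β : ℕ → ℝ) (Tinv : ℝ → ℝ) (j : ℕ) : Set ℝ :=
  {0, 1} ∪ {x | ∃ i k : ℕ, 1 ≤ i ∧ i < r ∧ k < j ∧ x = Tinv^[k] (β i)}

def partPts2 (β : ℕ → ℝ) (T Tinv : ℝ → ℝ) (i k j : ℕ) : Set ℝ :=
  {0, 1} ∪ {x | ∃ l : ℕ, l < j ∧ x = T^[l] (Tinv^[k] (β i))}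

def BalancedPartitionLengths (r : ℕ) (β : ℕ → ℝ) (T Tinv : ℝ → ℝ) (c : ℝ) : Prop :=
  (∀ j : ℕ, 1 ≤ j → ∀ a b : ℝ, IsGap (partPts r β Tinv j) a b →
    1 / (c * j) ≤ b - a ∧ b - a ≤ c / j) ∧
  (∀ j : ℕ, 1 ≤ j → ∀ i : ℕ, i < r → ∀ k : ℕ, k < j →
    ∀ a b : ℝ, IsGap (partPts2 β T Tinv i k j) a b →
      1 / (c * j) ≤ b - a ∧ b - a ≤ c / j)

noncomputable def birkhoff (T : ℝ → ℝ) (h : ℝ → ℝ) (j : ℕ) (x : ℝ) : ℝ :=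
  ∑ k ∈ Finset.range j, h (T^[k] x)

noncomputable def logf (r : ℕ) (β : ℕ → ℝ) (cp cm : ℕ → ℝ) (x : ℝ) : ℝ :=
  (∑ i ∈ Finset.range r, -(cp i * Real.log (Int.fract (x - β i)))) +
  (∑ i ∈ Finset.range r, -(cm (i + 1) * Real.log (Int.fract (β (i + 1) - x))))

noncomputable def logfD (r : ℕ) (β : ℕ → ℝ) (cp cm : ℕ → ℝ) (x : ℝ) : ℝ :=
  (∑ i ∈ Finset.range r, -(cp i / Int.fract (x - β i))) +
  (∑ i ∈ Finset.range r, cm (i + 1) / Int.fract (β (i + 1) - x))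

def IDOC (r : ℕ) (β : ℕ → ℝ) (T : ℝ → ℝ) : Prop :=
  (∀ i : ℕ, 1 ≤ i → i < r → (Set.range fun n : ℕ => T^[n] (β i)).Infinite) ∧
  (∀ i i' : ℕ, 1 ≤ i → i < r → 1 ≤ i' → i' < r → i ≠ i' →
    Disjoint (Set.range fun n : ℕ => T^[n] (β i)) (Set.range fun n : ℕ => T^[n] (β i')))

lemma fract_aux (u v : ℝ) (huv : u < v) (h1 : v - u < 1)
    (hu : Int.fract u ≠ 0) (hv : Int.fract v ≠ 0)
    (hmid : ∀ t, u < t → t < v → Int.fract t ≠ 0) :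
    Int.fract v = Int.fract u + (v - u) := by
  have fu0 : 0 < Int.fract u := (Int.fract_nonneg u).lt_of_ne (Ne.symm hu)
  have fv0 : 0 < Int.fract v := (Int.fract_nonneg v).lt_of_ne (Ne.symm hv)
  have fu1 : Int.fract u < 1 := Int.fract_lt_one u
  have fv1 : Int.fract v < 1 := Int.fract_lt_one v
  have hfu : Int.fract u = u - ⌊u⌋ := rfl
  have hfv : Int.fract v = v - ⌊v⌋ := rfl
  have hn01 : ⌊v⌋ = ⌊u⌋ ∨ ⌊v⌋ = ⌊u⌋ + 1 := by
    have h2 : ((⌊v⌋ - ⌊u⌋ : ℤ) : ℝ) = (v - u) - (Int.fract v - Int.fract u) := by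
      push_cast; rw [hfu, hfv]; ring
    have hlb : (-1 : ℝ) < ((⌊v⌋ - ⌊u⌋ : ℤ) : ℝ) := by rw [h2]; linarith
    have hub : ((⌊v⌋ - ⌊u⌋ : ℤ) : ℝ) < 2 := by rw [h2]; linarith
    have hlb' : (-1 : ℤ) < ⌊v⌋ - ⌊u⌋ := by exact_mod_cast hlb
    have hub' : ⌊v⌋ - ⌊u⌋ < 2 := by exact_mod_cast hub
    omega
  rcases hn01 with h | h
  · rw [hfu, hfv, h]; ring
  · exfalso
    have hveq : Int.fract v = Int.fract u + (v - u) - 1 := by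
      rw [hfu, hfv, h]; push_cast; ring
    set t := u + (1 - Int.fract u) with ht
    have hut : u < t := by rw [ht]; linarith
    have htv : t < v := by rw [ht]; linarith
    have : Int.fract t = 0 := by
      have : t = ((⌊u⌋ + 1 : ℤ) : ℝ) := by rw [ht, hfu]; push_cast; ring
      rw [this, Int.fract_intCast]
    exact hmid t hut htv this

/-- If `-1 < u < 1` and `fract u = 0` then `u = 0`. -/
lemma fract_zero_small (u : ℝ) (h1 : -1 < u) (h2 : u < 1) (h : Int.fract u = 0) : u = 0 := by
  have hu : u = (⌊u⌋ : ℝ) := by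
    have : u - ⌊u⌋ = 0 := h
    linarith
  have hl : (-1 : ℤ) < ⌊u⌋ := by exact_mod_cast hu ▸ h1
  have hr : ⌊u⌋ < 1 := by exact_mod_cast hu ▸ h2
  have : ⌊u⌋ = 0 := by omega
  rw [hu, this]; norm_num

set_option maxHeartbeats 2000000 in
/-- Lemma 4.3: for an IET with the IDOC and balanced partition lengths with
constant `c`, for every `0 < η < 1` there is `δ > 0` such that for every `j ≥ 6c²` and
every subinterval `Δ_i^j = (a, b)` of the partition `P_j`, the Lebesgue measure of
`{x ∈ Δ_i^j : |f'^{(j)}(x)| > δ j}` exceeds `η · (b - a)`. -/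
theorem stmt1
    (r : ℕ) (hr : 2 ≤ r)
    (β : ℕ → ℝ) (hβ0 : β 0 = 0) (hβr : β r = 1)
    (hβmono : ∀ i j : ℕ, i < j → j ≤ r → β i < β j)
    (T Tinv : ℝ → ℝ)
    (hTbij : Set.BijOn T (Set.Ico 0 1) (Set.Ico 0 1))
    (hTtrans : ∀ i : ℕ, i < r → ∃ v : ℝ, ∀ x ∈ Set.Ico (β i) (β (i + 1)), T x = x + v)
    (hTinv : ∀ x ∈ Set.Ico (0 : ℝ) 1,
      Tinv (T x) = x ∧ T (Tinv x) = x ∧ Tinv x ∈ Set.Ico (0 : ℝ) 1)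
    (hidoc : IDOC r β T)
    (c : ℝ) (hc : 0 < c)
    (hbal : BalancedPartitionLengths r β T Tinv c)
    (cp cm : ℕ → ℝ)
    (hcp : ∀ i : ℕ, i < r → 0 < cp i) (hcm : ∀ i : ℕ, i < r → 0 < cm (i + 1)) :
    ∀ η : ℝ, 0 < η → η < 1 → ∃ δ > (0 : ℝ), ∀ j : ℕ, 6 * c ^ 2 ≤ (j : ℝ) →
      ∀ a b : ℝ, IsGap (partPts r β Tinv j) a b →
        ENNReal.ofReal (η * (b - a)) <
          volume {x ∈ Set.Ioo a b | δ * (j : ℝ) < |birkhoff T (logfD r β cp cm) j x|} := by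
  classical
  intro η hη0 hη1
  have hr0 : 0 < r := by omega
  have hMne : (Finset.range r).Nonempty := ⟨0, Finset.mem_range.2 hr0⟩
  set M : ℝ := (Finset.range r).inf' hMne cp with hMdef
  have hM : 0 < M := by
    rw [hMdef, Finset.lt_inf'_iff]
    exact fun i hi => hcp i (Finset.mem_range.1 hi)
  have hMle : ∀ i, i < r → M ≤ cp i := fun i hi =>
    Finset.inf'_le cp (Finset.mem_range.2 hi)
  have hδpos : 0 < (1 - η) * M / (8 * c ^ 3) := by
    apply div_pos (mul_pos (by linarith) hM) (by positivity)
  refine ⟨(1 - η) * M / (8 * c ^ 3), hδpos, ?_⟩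
  set δ : ℝ := (1 - η) * M / (8 * c ^ 3) with hδdef
  intro j hj a b hgap
  have hjpos : 0 < (j : ℝ) := lt_of_lt_of_le (by positivity) hj
  have hj1 : 1 ≤ j := by exact_mod_cast Nat.one_le_iff_ne_zero.2 (by
    intro h; rw [h] at hjpos; norm_num at hjpos)
  obtain ⟨haS, hbS, hab, hsep⟩ := hgap
  -- basic facts about β and orbits
  have hβIco : ∀ i, 1 ≤ i → i < r → β i ∈ Set.Ico (0:ℝ) 1 := by
    intro i h1 h2
    constructor
    · rw [← hβ0]; exact le_of_lt (hβmono 0 i h1 (le_of_lt h2))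
    · rw [← hβr]; exact hβmono i r h2 le_rfl
  have hTIco : ∀ z ∈ Set.Ico (0:ℝ) 1, ∀ k : ℕ, T^[k] z ∈ Set.Ico (0:ℝ) 1 := by
    intro z hz k
    induction k with
    | zero => simpa using hz
    | succ k ih => rw [Function.iterate_succ_apply']; exact hTbij.mapsTo ih
  have hTinvIco : ∀ z ∈ Set.Ico (0:ℝ) 1, ∀ k : ℕ, Tinv^[k] z ∈ Set.Ico (0:ℝ) 1 := by
    intro z hz k
    induction k with
    | zero => simpa using hz
    | succ k ih => rw [Function.iterate_succ_apply']; exact (hTinv _ ih).2.2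
  have hTinvT : ∀ z ∈ Set.Ico (0:ℝ) 1, ∀ k : ℕ, Tinv^[k] (T^[k] z) = z := by
    intro z hz k
    induction k with
    | zero => simp
    | succ k ih =>
      rw [Function.iterate_succ_apply' (f := T), Function.iterate_succ_apply (f := Tinv),
        (hTinv _ (hTIco z hz k)).1, ih]
  have hTTinv : ∀ z ∈ Set.Ico (0:ℝ) 1, ∀ k : ℕ, T^[k] (Tinv^[k] z) = z := by
    intro z hz k
    induction k with
    | zero => simp
    | succ k ih =>
      rw [Function.iterate_succ_apply' (f := Tinv), Function.iterate_succ_apply (f := T),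
        (hTinv _ (hTinvIco z hz k)).2.1, ih]
  -- the gap is inside [0,1]
  have hS01 : ∀ z ∈ partPts r β Tinv j, z ∈ Set.Icc (0:ℝ) 1 := by
    intro z hz
    rcases hz with hz | hz
    · rcases hz with h | h <;> rw [h] <;> norm_num
    · obtain ⟨i, k, h1, h2, _, h4⟩ := hz
      have := hTinvIco (β i) (hβIco i h1 h2) k
      rw [h4]
      exact ⟨this.1, le_of_lt this.2⟩
  have ha0 : 0 ≤ a := (hS01 a haS).1
  have hb1 : b ≤ 1 := (hS01 b hbS).2
  have hnot : ∀ x, a < x → x < b → x ∉ partPts r β Tinv j := by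
    intro x h1 h2 hx
    rcases hsep x hx with h | h <;> linarith
  -- balanced lengths for this gap
  obtain ⟨hba1, hba2⟩ := hbal.1 j hj1 a b ⟨haS, hbS, hab, hsep⟩
  have hba0 : 0 < b - a := by linarith
  have hba1' : 0 < 1 / (c * (j:ℝ)) := by positivity
  -- find_i0 helper
  have find_i0 : ∀ u v : ℝ, 0 ≤ u → u < v → v ≤ 1 →
      (∀ i, 1 ≤ i → i < r → ¬(u < β i ∧ β i < v)) →
      ∃ i0, i0 < r ∧ 0 ≤ β i0 ∧ β i0 ≤ u ∧ v ≤ β (i0+1) ∧ β (i0+1) ≤ 1 := by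
    intro u v hu huv hv1 havoid
    set F := (Finset.range r).filter (fun i => β i ≤ u) with hF
    have h0F : 0 ∈ F := by
      simp only [hF, Finset.mem_filter, Finset.mem_range]
      exact ⟨hr0, by rw [hβ0]; exact hu⟩
    have hFne : F.Nonempty := ⟨0, h0F⟩
    set i0 := F.max' hFne with hi0
    have hi0F : i0 ∈ F := F.max'_mem hFne
    have hi0r : i0 < r := Finset.mem_range.1 (Finset.mem_filter.1 hi0F).1
    have hβi0 : β i0 ≤ u := (Finset.mem_filter.1 hi0F).2
    have h0βi0 : 0 ≤ β i0 := by
      rcases Nat.eq_zero_or_pos i0 with h | h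
      · rw [h, hβ0]
      · exact le_of_lt (by rw [← hβ0]; exact hβmono 0 i0 h (le_of_lt hi0r))
    refine ⟨i0, hi0r, h0βi0, hβi0, ?_, ?_⟩
    · rcases eq_or_lt_of_le (Nat.succ_le_of_lt hi0r) with h | h
      · rw [show i0+1 = r from h, hβr]; exact hv1
      · by_contra hvv
        push_neg at hvv
        have h1 : 1 ≤ i0 + 1 := by omega
        have hne : ¬ β (i0+1) ≤ u := by
          intro hle
          have : i0 + 1 ∈ F := by
            simp only [hF, Finset.mem_filter, Finset.mem_range]
            exact ⟨h, hle⟩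
          have := F.le_max' _ this
          omega
        push_neg at hne
        exact havoid (i0+1) h1 h ⟨hne, hvv⟩
    · rcases eq_or_lt_of_le (Nat.succ_le_of_lt hi0r) with h | h
      · rw [show i0+1 = r from h, hβr]
      · exact le_of_lt (by rw [← hβr]; exact hβmono (i0+1) r h le_rfl)
  -- key induction: T^[k] is a translation on [a,b)
  have key : ∀ k, k < j → ∃ w : ℝ, ∃ i0 : ℕ, i0 < r ∧
      (∀ x ∈ Set.Ico a b, T^[k] x = x + w) ∧
      0 ≤ β i0 ∧ β i0 ≤ a + w ∧ b + w ≤ β (i0+1) ∧ β (i0+1) ≤ 1 := by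
    intro k
    induction k with
    | zero =>
      intro h0j
      refine ⟨0, ?_⟩
      have havoid : ∀ i, 1 ≤ i → i < r → ¬(a + 0 < β i ∧ β i < b + 0) := by
        intro i h1 h2 ⟨hu, hv⟩
        exact hnot (β i) (by linarith) (by linarith)
          (Or.inr ⟨i, 0, h1, h2, h0j, by simp⟩)
      obtain ⟨i0, h1, h2, h3, h4, h5⟩ := find_i0 (a + 0) (b + 0) (by linarith)
        (by linarith) (by linarith) havoid
      exact ⟨i0, h1, fun x _ => by simp, h2, h3, h4, h5⟩
    | succ k ih =>
      intro hk1j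
      have hkj : k < j := Nat.lt_of_succ_lt hk1j
      obtain ⟨w, i0, hi0r, hT, h0β, hβa, hβb, hβ1⟩ := ih hkj
      obtain ⟨v, hv⟩ := hTtrans i0 hi0r
      have hstep : ∀ x ∈ Set.Ico a b, T^[k+1] x = x + (w + v) := by
        intro x hx
        rw [Function.iterate_succ_apply', hT x hx,
          hv (x + w) ⟨by have := hx.1; linarith, by have := hx.2; linarith⟩]
        ring
      have hxIco : ∀ x ∈ Set.Ico a b, x ∈ Set.Ico (0:ℝ) 1 := by
        intro x hx
        exact ⟨le_trans ha0 hx.1, lt_of_lt_of_le hx.2 hb1⟩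
      have hmem : ∀ x ∈ Set.Ico a b, 0 ≤ x + (w + v) ∧ x + (w + v) < 1 := by
        intro x hx
        have := hTIco x (hxIco x hx) (k+1)
        rw [hstep x hx] at this
        exact this
      have hua : 0 ≤ a + (w + v) := (hmem a ⟨le_rfl, hab⟩).1
      have hub : b + (w + v) ≤ 1 := by
        by_contra h
        push_neg at h
        have h1 : a + (w + v) < 1 := (hmem a ⟨le_rfl, hab⟩).2
        set x := max a (1 - (w + v)) with hxdef
        have hx1 : x ∈ Set.Ico a b := by
          constructor
          · exact le_max_left _ _
          · apply max_lt hab; linarith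
        have := (hmem x hx1).2
        have : (1 - (w + v)) + (w + v) < 1 := by
          have hle : 1 - (w + v) ≤ x := le_max_right _ _
          linarith [(hmem x hx1).2]
        linarith
      have havoid : ∀ i, 1 ≤ i → i < r → ¬(a + (w+v) < β i ∧ β i < b + (w+v)) := by
        intro i h1 h2 ⟨hβu, hβv⟩
        set x := β i - (w + v) with hxdef
        have hx1 : x ∈ Set.Ico a b := ⟨by linarith [le_of_lt (show a < x by rw [hxdef]; linarith)], by rw [hxdef]; linarith⟩
        have hxab : a < x ∧ x < b := ⟨by rw [hxdef]; linarith, by rw [hxdef]; linarith⟩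
        have hTx : T^[k+1] x = β i := by rw [hstep x hx1]; rw [hxdef]; ring
        have hxi : x = Tinv^[k+1] (β i) := by
          have := hTinvT x (hxIco x hx1) (k+1)
          rw [hTx] at this
          exact this.symm
        exact hnot x hxab.1 hxab.2 (Or.inr ⟨i, k+1, h1, h2, hk1j, hxi⟩)
      obtain ⟨i0', h1, h2, h3, h4, h5⟩ := find_i0 (a + (w+v)) (b + (w+v)) hua
        (by linarith) hub havoid
      exact ⟨w + v, i0', h1, hstep, h2, h3, h4, h5⟩
  choose! w i0 hi0r hTk h0β hβa hβb hβ1 using key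
  -- orbit points are in (0,1)
  have horb : ∀ k, k < j → ∀ x ∈ Set.Ioo a b, 0 < x + w k ∧ x + w k < 1 := by
    intro k hk x hx
    constructor
    · have := hβa k hk; have := h0β k hk; have := hx.1; linarith
    · have := hβb k hk; have := hβ1 k hk; have := hx.2; linarith
  -- P1 : fract (x + w k - β i) ≠ 0
  have hA : ∀ k, k < j → ∀ i, i < r → ∀ x ∈ Set.Ioo a b,
      Int.fract (x + w k - β i) ≠ 0 := by
    intro k hk i hi x hx h0
    have horb' := horb k hk x hx
    have hβi : 0 ≤ β i ∧ β i < 1 := by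
      rcases Nat.eq_zero_or_pos i with h | h
      · rw [h, hβ0]; norm_num
      · have := hβIco i h hi; exact ⟨this.1, this.2⟩
    have harg : x + w k - β i = 0 := by
      apply fract_zero_small _ (by linarith) (by linarith) h0
    have hxw : x + w k = β i := by linarith
    rcases Nat.eq_zero_or_pos i with h | h
    · rw [h, hβ0] at hxw; linarith
    · have hxIco : x ∈ Set.Ico (0:ℝ) 1 :=
        ⟨le_trans ha0 (le_of_lt hx.1), lt_of_lt_of_le hx.2 hb1⟩
      have hTx : T^[k] x = β i := by rw [hTk k hk x ⟨le_of_lt hx.1, hx.2⟩]; exact hxw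
      have hxi : x = Tinv^[k] (β i) := by
        have := hTinvT x hxIco k
        rw [hTx] at this
        exact this.symm
      exact hnot x hx.1 hx.2 (Or.inr ⟨i, k, h, hi, hk, hxi⟩)
  -- P3 : fract (β (i+1) - (x + w k)) ≠ 0
  have hB : ∀ k, k < j → ∀ i, i < r → ∀ x ∈ Set.Ioo a b,
      Int.fract (β (i+1) - (x + w k)) ≠ 0 := by
    intro k hk i hi x hx h0
    have horb' := horb k hk x hx
    have hβi : 0 < β (i+1) ∧ β (i+1) ≤ 1 := by
      constructor
      · rw [← hβ0]; exact hβmono 0 (i+1) (by omega) (by omega)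
      · rcases eq_or_lt_of_le (Nat.succ_le_of_lt hi) with h | h
        · rw [show i+1 = r from h, hβr]
        · exact le_of_lt (by rw [← hβr]; exact hβmono (i+1) r h le_rfl)
    have harg : β (i+1) - (x + w k) = 0 := by
      apply fract_zero_small _ (by linarith) (by linarith) h0
    have hxw : x + w k = β (i+1) := by linarith
    rcases eq_or_lt_of_le (Nat.succ_le_of_lt hi) with h | h
    · rw [show i+1 = r from h, hβr] at hxw; linarith
    · have hxIco : x ∈ Set.Ico (0:ℝ) 1 :=
        ⟨le_trans ha0 (le_of_lt hx.1), lt_of_lt_of_le hx.2 hb1⟩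
      have hTx : T^[k] x = β (i+1) := by rw [hTk k hk x ⟨le_of_lt hx.1, hx.2⟩]; exact hxw
      have hxi : x = Tinv^[k] (β (i+1)) := by
        have := hTinvT x hxIco k
        rw [hTx] at this
        exact this.symm
      exact hnot x hx.1 hx.2 (Or.inr ⟨i+1, k, by omega, h, hk, hxi⟩)
  have hba1'' : b - a ≤ 1 := by linarith
  -- monotonicity of each fract along the gap
  have hAmono : ∀ k, k < j → ∀ i, i < r → ∀ x ∈ Set.Ioo a b, ∀ y ∈ Set.Ioo a b, x < y →
      Int.fract (y + w k - β i) = Int.fract (x + w k - β i) + (y - x) := by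
    intro k hk i hi x hx y hy hxy
    have := fract_aux (x + w k - β i) (y + w k - β i) (by linarith)
      (by have := hx.1; have := hy.2; linarith)
      (hA k hk i hi x hx) (hA k hk i hi y hy) ?_
    · linarith [this]
    · intro t h1 h2
      have : t = (t - w k + β i) + w k - β i := by ring
      rw [this]
      exact hA k hk i hi _ ⟨by have := hx.1; linarith, by have := hy.2; linarith⟩
  have hBmono : ∀ k, k < j → ∀ i, i < r → ∀ x ∈ Set.Ioo a b, ∀ y ∈ Set.Ioo a b, x < y →
      Int.fract (β (i+1) - (x + w k)) = Int.fract (β (i+1) - (y + w k)) + (y - x) := by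
    intro k hk i hi x hx y hy hxy
    have := fract_aux (β (i+1) - (y + w k)) (β (i+1) - (x + w k)) (by linarith)
      (by have := hx.1; have := hy.2; linarith)
      (hB k hk i hi y hy) (hB k hk i hi x hx) ?_
    · linarith [this]
    · intro t h1 h2
      have : t = β (i+1) - ((β (i+1) - t - w k) + w k) := by ring
      rw [this]
      exact hB k hk i hi _ ⟨by have := hx.1; linarith, by have := hy.2; linarith⟩
  -- the singular index
  have hsing : ∃ k' i', k' < j ∧ i' < r ∧ a + w k' = β i' := by
    rcases haS with h | h
    · rcases h with h | h
      · refine ⟨0, 0, by omega, hr0, ?_⟩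
        have h0 : T^[0] a = a + w 0 := hTk 0 (by omega) a ⟨le_rfl, hab⟩
        simp only [Function.iterate_zero_apply] at h0
        rw [← h0, h, hβ0]
      · exfalso; rw [h] at hab; linarith
    · obtain ⟨i, k, h1, h2, hkj, heq⟩ := h
      refine ⟨k, i, hkj, h2, ?_⟩
      have hTa : T^[k] a = β i := by
        rw [heq]; exact hTTinv (β i) (hβIco i h1 h2) k
      rw [← hTa, hTk k hkj a ⟨le_rfl, hab⟩]
  obtain ⟨k', i', hk'j, hi'r, hsing'⟩ := hsing
  -- main difference bound
  have hdiff : ∀ x ∈ Set.Ioo a b, ∀ y ∈ Set.Ioo a b, x < y →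
      (y - x) * (M * (j:ℝ)^2 / c^2) ≤
        birkhoff T (logfD r β cp cm) j y - birkhoff T (logfD r β cp cm) j x := by
    intro x hx y hy hxy
    have hxmem : x ∈ Set.Ico a b := ⟨le_of_lt hx.1, hx.2⟩
    have hymem : y ∈ Set.Ico a b := ⟨le_of_lt hy.1, hy.2⟩
    have hAx : ∀ k, k < j → ∀ i, i < r → 0 < Int.fract (x + w k - β i) :=
      fun k hk i hi => (Int.fract_nonneg _).lt_of_ne (Ne.symm (hA k hk i hi x hx))
    have hBy : ∀ k, k < j → ∀ i, i < r → 0 < Int.fract (β (i+1) - (y + w k)) :=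
      fun k hk i hi => (Int.fract_nonneg _).lt_of_ne (Ne.symm (hB k hk i hi y hy))
    have hsum : birkhoff T (logfD r β cp cm) j y - birkhoff T (logfD r β cp cm) j x
        = ∑ k ∈ Finset.range j,
          (logfD r β cp cm (y + w k) - logfD r β cp cm (x + w k)) := by
      unfold birkhoff
      rw [← Finset.sum_sub_distrib]
      apply Finset.sum_congr rfl
      intro k hk
      rw [hTk k (Finset.mem_range.1 hk) y hymem, hTk k (Finset.mem_range.1 hk) x hxmem]
    rw [hsum]
    have hterm : ∀ k ∈ Finset.range j,
        0 ≤ logfD r β cp cm (y + w k) - logfD r β cp cm (x + w k) := by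
      intro k hk
      have hk' := Finset.mem_range.1 hk
      rw [sub_nonneg]
      unfold logfD
      apply add_le_add
      · apply Finset.sum_le_sum
        intro i hi
        have hi' := Finset.mem_range.1 hi
        have h1 : 0 < Int.fract (x + w k - β i) := hAx k hk' i hi'
        have h2 : Int.fract (x + w k - β i) ≤ Int.fract (y + w k - β i) := by
          rw [hAmono k hk' i hi' x hx y hy hxy]; linarith
        have h3 : 0 ≤ cp i := le_of_lt (hcp i hi')
        have := div_le_div_of_nonneg_left h3 h1 h2
        linarith
      · apply Finset.sum_le_sum
        intro i hi
        have hi' := Finset.mem_range.1 hi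
        have h1 : 0 < Int.fract (β (i+1) - (y + w k)) := hBy k hk' i hi'
        have h2 : Int.fract (β (i+1) - (y + w k)) ≤ Int.fract (β (i+1) - (x + w k)) := by
          rw [hBmono k hk' i hi' x hx y hy hxy]; linarith
        have h3 : 0 ≤ cm (i+1) := le_of_lt (hcm i hi')
        exact div_le_div_of_nonneg_left h3 h1 h2
    have hspec : (y - x) * (M * (j:ℝ)^2 / c^2) ≤
        logfD r β cp cm (y + w k') - logfD r β cp cm (x + w k') := by
      have hxa : 0 < x - a := sub_pos.2 hx.1
      have hya : 0 < y - a := sub_pos.2 hy.1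
      have hex : x + w k' - β i' = x - a := by rw [← hsing']; ring
      have hey : y + w k' - β i' = y - a := by rw [← hsing']; ring
      have hfx : Int.fract (x + w k' - β i') = x - a := by
        rw [hex]; exact Int.fract_eq_self.2 ⟨le_of_lt hxa, by have := hx.2; linarith⟩
      have hfy : Int.fract (y + w k' - β i') = y - a := by
        rw [hey]; exact Int.fract_eq_self.2 ⟨le_of_lt hya, by have := hy.2; linarith⟩
      -- the singular summand dominates
      have hnum : (y - x) * (M * (j:ℝ)^2 / c^2) ≤ cp i' / (x - a) - cp i' / (y - a) := by
        have hxc : x - a ≤ c / j := le_trans (by have := hy.2; linarith) hba2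
        have hyc : y - a ≤ c / j := le_trans (by have := hy.2; linarith) hba2
        have hprod : (x - a) * (y - a) ≤ (c/j) * (c/j) :=
          mul_le_mul hxc hyc (le_of_lt hya) (by positivity)
        have hprod0 : 0 < (x - a) * (y - a) := mul_pos hxa hya
        have hyx : 0 ≤ y - x := by linarith
        calc (y - x) * (M * (j:ℝ)^2 / c^2)
            = M * (y - x) / ((c/j) * (c/j)) := by
              field_simp
          _ ≤ M * (y - x) / ((x - a) * (y - a)) :=
              div_le_div_of_nonneg_left (by positivity) hprod0 hprod
          _ ≤ cp i' * (y - x) / ((x - a) * (y - a)) := by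
              apply div_le_div_of_nonneg_right ?_ hprod0.le
              exact mul_le_mul_of_nonneg_right (hMle i' hi'r) hyx
          _ = cp i' / (x - a) - cp i' / (y - a) := by
              field_simp
              ring
      unfold logfD
      have hS2 : (∑ i ∈ Finset.range r, cm (i + 1) / Int.fract (β (i + 1) - (x + w k')))
          ≤ ∑ i ∈ Finset.range r, cm (i + 1) / Int.fract (β (i + 1) - (y + w k')) := by
        apply Finset.sum_le_sum
        intro i hi
        have hi' := Finset.mem_range.1 hi
        have h1 : 0 < Int.fract (β (i+1) - (y + w k')) := hBy k' hk'j i hi'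
        have h2 : Int.fract (β (i+1) - (y + w k')) ≤ Int.fract (β (i+1) - (x + w k')) := by
          rw [hBmono k' hk'j i hi' x hx y hy hxy]; linarith
        exact div_le_div_of_nonneg_left (le_of_lt (hcm i hi')) h1 h2
      have hS1 : (y - x) * (M * (j:ℝ)^2 / c^2) ≤
          (∑ i ∈ Finset.range r, -(cp i / Int.fract (y + w k' - β i))) -
          (∑ i ∈ Finset.range r, -(cp i / Int.fract (x + w k' - β i))) := by
        rw [← Finset.sum_sub_distrib]
        have hnn : ∀ i ∈ Finset.range r,
            0 ≤ -(cp i / Int.fract (y + w k' - β i)) - -(cp i / Int.fract (x + w k' - β i)) := by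
          intro i hi
          have hi' := Finset.mem_range.1 hi
          have h1 : 0 < Int.fract (x + w k' - β i) := hAx k' hk'j i hi'
          have h2 : Int.fract (x + w k' - β i) ≤ Int.fract (y + w k' - β i) := by
            rw [hAmono k' hk'j i hi' x hx y hy hxy]; linarith
          have := div_le_div_of_nonneg_left (le_of_lt (hcp i hi')) h1 h2
          linarith
        have hsingle := Finset.single_le_sum hnn (Finset.mem_range.2 hi'r)
        refine le_trans ?_ hsingle
        rw [hfx, hfy]
        linarith [hnum]
      linarith [hS1, hS2]
    exact le_trans hspec (Finset.single_le_sum hterm (Finset.mem_range.2 hk'j))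
  -- final measure estimate
  set G := fun x => birkhoff T (logfD r β cp cm) j x with hG
  set L : ℝ := (1 - η) / (4 * c * j) with hLdef
  have hL0 : 0 < L := by
    rw [hLdef]; apply div_pos (by linarith) (by positivity)
  set Bd := {x ∈ Set.Ioo a b | |G x| ≤ δ * j} with hBd
  have hLbound : ∀ x ∈ Bd, ∀ y ∈ Bd, y - x ≤ L := by
    intro x hxB y hyB
    rcases le_or_gt y x with h | hxy
    · linarith
    · have hd := hdiff x hxB.1 y hyB.1 hxy
      have h2 : G y - G x ≤ 2 * (δ * j) := by
        have t1 := abs_le.1 hxB.2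
        have t2 := abs_le.1 hyB.2
        have : G y ≤ δ * j := t2.2
        have : -(δ * j) ≤ G x := t1.1
        linarith [t1.1, t2.2]
      have hK : 0 < M * (j:ℝ)^2 / c^2 := by positivity
      have h3 : y - x ≤ 2 * (δ * j) / (M * (j:ℝ)^2 / c^2) := by
        rw [le_div_iff₀ hK]
        calc (y - x) * (M * (j:ℝ)^2 / c^2) ≤ G y - G x := hd
          _ ≤ 2 * (δ * j) := h2
      have h4 : 2 * (δ * j) / (M * (j:ℝ)^2 / c^2) = L := by
        rw [hLdef, hδdef]
        field_simp
        ring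
      linarith
  have hvol : volume (Set.Ioo a b) = ENNReal.ofReal (b - a) := Real.volume_Ioo
  rcases Set.eq_empty_or_nonempty Bd with hBdE | ⟨x₀, hx₀⟩
  · have hsub : Set.Ioo a b ⊆ {x ∈ Set.Ioo a b | δ * j < |G x|} := by
      intro z hz
      rcases lt_or_ge (δ * j) (|G z|) with h | h
      · exact ⟨hz, h⟩
      · exact absurd (show z ∈ Bd from ⟨hz, h⟩) (by rw [hBdE]; exact Set.notMem_empty z)
    calc ENNReal.ofReal (η * (b - a)) < ENNReal.ofReal (b - a) := by
          rw [ENNReal.ofReal_lt_ofReal_iff hba0]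
          nlinarith
      _ = volume (Set.Ioo a b) := hvol.symm
      _ ≤ _ := measure_mono hsub
  · have hcov : Set.Ioo a b ⊆ {x ∈ Set.Ioo a b | δ * j < |G x|} ∪ Set.Icc (x₀ - L) (x₀ + L) := by
      intro z hz
      rcases lt_or_ge (δ * j) (|G z|) with h | h
      · exact Or.inl ⟨hz, h⟩
      · have hzB : z ∈ Bd := ⟨hz, h⟩
        refine Or.inr ⟨?_, ?_⟩
        · have := hLbound z hzB x₀ hx₀
          linarith
        · have := hLbound x₀ hx₀ z hzB
          linarith
    have hIcc : volume (Set.Icc (x₀ - L) (x₀ + L)) = ENNReal.ofReal (2 * L) := by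
      rw [Real.volume_Icc]
      congr 1
      ring
    have hle : ENNReal.ofReal (b - a) ≤
        volume {x ∈ Set.Ioo a b | δ * j < |G x|} + ENNReal.ofReal (2 * L) := by
      rw [← hIcc, ← hvol]
      exact le_trans (measure_mono hcov) (measure_union_le _ _)
    by_contra hcon
    push_neg at hcon
    have hle2 : ENNReal.ofReal (b - a) ≤ ENNReal.ofReal (η * (b - a)) + ENNReal.ofReal (2 * L) :=
      le_trans hle (add_le_add_left hcon _)
    rw [← ENNReal.ofReal_add (by positivity) (by positivity)] at hle2
    have hle3 : b - a ≤ η * (b - a) + 2 * L :=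
      le_trans (le_of_eq rfl) ((ENNReal.ofReal_le_ofReal_iff (by positivity)).1 hle2)
    -- but 2L < (1-η)(b-a)
    have h2L : 2 * L < (1 - η) * (b - a) := by
      have hba : 1 / (c * j) ≤ b - a := hba1
      have : 2 * L = (1 - η) / (2 * c * j) := by rw [hLdef]; ring
      rw [this]
      have h1 : (1 - η) / (2 * c * j) < (1 - η) / (c * j) := by
        apply div_lt_div_of_pos_left (by linarith) (by positivity)
        nlinarith
      have h2 : (1 - η) / (c * j) ≤ (1 - η) * (b - a) := by
        rw [div_eq_mul_inv, ← one_div]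
        exact mul_le_mul_of_nonneg_left hba (by linarith)
      linarith
    nlinarith
end

section
/- Let T be an interval exchange transformation of r ≥ 2 intervals of [0,1) with discontinuity points 0 = β_0 < β_1 < ⋯ < β_{r−1} < β_r = 1 satisfying the infinite distinct orbit condition, and let f(x) = Σ_{i=0}^{r−1} (−c_i⁺ log{x − β_i}) + Σ_{i=0}^{r−1} (−c_{i+1}⁻ log{β_{i+1} − x}) with all c_i⁺, c_{i+1}⁻ > 0. Then for every j ≥ 2 and every 0 ≤ i ≤ (r−1)j, the Birkhoff sum f′^{(j)} of the pointwise derivative f′ of f is strictly increasing on the open interval Δ_i^j = (x_i^j, x_{i+1}^j) of the partition P_j, with lim_{x→(x_i^j)^+} f′^{(j)}(x) = −∞ and lim_{x→(x_{i+1}^j)^−} f′^{(j)}(x) = +∞; the same conclusions hold for the Birkhoff sums f′′′^{(j)} of the third derivative f′′′ of f. -/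
open MeasureTheory Filter Set
open scoped ENNReal

/-- The pointwise third derivative
`f'''(x) = ∑_{i=0}^{r-1} (-2c_i⁺/{x - β_i}³) + ∑_{i=0}^{r-1} (2c_{i+1}⁻/{β_{i+1} - x}³)`. -/
noncomputable def logfD3 (r : ℕ) (β : ℕ → ℝ) (cp cm : ℕ → ℝ) (x : ℝ) : ℝ :=
  (∑ i ∈ Finset.range r, -(2 * cp i / (Int.fract (x - β i)) ^ 3)) +
  (∑ i ∈ Finset.range r, 2 * cm (i + 1) / (Int.fract (β (i + 1) - x)) ^ 3)

private lemma fract_pos_case {t : ℝ} (h1 : 0 < t) (h2 : t < 1) : Int.fract t = t :=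
  Int.fract_eq_self.2 ⟨h1.le, h2⟩

private lemma fract_neg_case {t : ℝ} (h1 : -1 < t) (h2 : t < 0) : Int.fract t = t + 1 := by
  rw [← Int.fract_add_one t]
  exact Int.fract_eq_self.2 ⟨by linarith, by linarith⟩

private lemma sum_tendsto_cases {ι : Type*} (l : Filter ℝ) (s : Finset ι) (f : ι → ℝ → ℝ)
    (h : ∀ i ∈ s, Tendsto (f i) l atBot ∨ ∃ L, Tendsto (f i) l (nhds L)) :
    Tendsto (fun x => ∑ i ∈ s, f i x) l atBot ∨
      ∃ L, Tendsto (fun x => ∑ i ∈ s, f i x) l (nhds L) := by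
  classical
  induction s using Finset.induction with
  | empty => exact Or.inr ⟨0, by simpa using (tendsto_const_nhds : Tendsto (fun _ : ℝ => (0:ℝ)) l _)⟩
  | @insert a s hna ih =>
    have ha := h a (Finset.mem_insert_self a s)
    have hs := ih (fun i hi => h i (Finset.mem_insert_of_mem hi))
    have heq : (fun x => ∑ i ∈ insert a s, f i x) = fun x => f a x + ∑ i ∈ s, f i x := by
      funext x; rw [Finset.sum_insert hna]
    rw [heq]
    rcases ha with ha | ⟨L1, ha⟩ <;> rcases hs with hs | ⟨L2, hs⟩
    · exact Or.inl (Tendsto.atBot_add_atBot ha hs)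
    · exact Or.inl (ha.atBot_add hs)
    · exact Or.inl (ha.add_atBot hs)
    · exact Or.inr ⟨L1 + L2, ha.add hs⟩

private lemma sum_tendsto_cases_top {ι : Type*} (l : Filter ℝ) (s : Finset ι) (f : ι → ℝ → ℝ)
    (h : ∀ i ∈ s, Tendsto (f i) l atTop ∨ ∃ L, Tendsto (f i) l (nhds L)) :
    Tendsto (fun x => ∑ i ∈ s, f i x) l atTop ∨
      ∃ L, Tendsto (fun x => ∑ i ∈ s, f i x) l (nhds L) := by
  classical
  induction s using Finset.induction with
  | empty => exact Or.inr ⟨0, by simpa using (tendsto_const_nhds : Tendsto (fun _ : ℝ => (0:ℝ)) l _)⟩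
  | @insert a s hna ih =>
    have ha := h a (Finset.mem_insert_self a s)
    have hs := ih (fun i hi => h i (Finset.mem_insert_of_mem hi))
    have heq : (fun x => ∑ i ∈ insert a s, f i x) = fun x => f a x + ∑ i ∈ s, f i x := by
      funext x; rw [Finset.sum_insert hna]
    rw [heq]
    rcases ha with ha | ⟨L1, ha⟩ <;> rcases hs with hs | ⟨L2, hs⟩
    · exact Or.inl (Tendsto.atTop_add_atTop ha hs)
    · exact Or.inl (ha.atTop_add hs)
    · exact Or.inl (ha.add_atTop hs)
    · exact Or.inr ⟨L1 + L2, ha.add hs⟩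

private lemma sum_tendsto_atBot' {ι : Type*} (l : Filter ℝ) (s : Finset ι) (f : ι → ℝ → ℝ)
    (h : ∀ i ∈ s, Tendsto (f i) l atBot ∨ ∃ L, Tendsto (f i) l (nhds L))
    (i0 : ι) (hi0 : i0 ∈ s) (hb : Tendsto (f i0) l atBot) :
    Tendsto (fun x => ∑ i ∈ s, f i x) l atBot := by
  classical
  have heq : (fun x => ∑ i ∈ s, f i x) = fun x => f i0 x + ∑ i ∈ s.erase i0, f i x := by
    funext x; exact (Finset.add_sum_erase _ _ hi0).symm
  rw [heq]
  rcases sum_tendsto_cases l (s.erase i0) f (fun i hi => h i (Finset.mem_of_mem_erase hi)) with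
    h1 | ⟨L, h1⟩
  · exact Tendsto.atBot_add_atBot hb h1
  · exact hb.atBot_add h1

private lemma sum_tendsto_atTop' {ι : Type*} (l : Filter ℝ) (s : Finset ι) (f : ι → ℝ → ℝ)
    (h : ∀ i ∈ s, Tendsto (f i) l atTop ∨ ∃ L, Tendsto (f i) l (nhds L))
    (i0 : ι) (hi0 : i0 ∈ s) (hb : Tendsto (f i0) l atTop) :
    Tendsto (fun x => ∑ i ∈ s, f i x) l atTop := by
  classical
  have heq : (fun x => ∑ i ∈ s, f i x) = fun x => f i0 x + ∑ i ∈ s.erase i0, f i x := by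
    funext x; exact (Finset.add_sum_erase _ _ hi0).symm
  rw [heq]
  rcases sum_tendsto_cases_top l (s.erase i0) f (fun i hi => h i (Finset.mem_of_mem_erase hi)) with
    h1 | ⟨L, h1⟩
  · exact Tendsto.atTop_add_atTop hb h1
  · exact hb.atTop_add h1

/-- If `g → 0` within positive values and `C > 0`, then `C / g^p → atTop`. -/
private lemma div_pow_tendsto_atTop {C : ℝ} (hC : 0 < C) (p : ℕ) (hp : p ≠ 0) (l : Filter ℝ) (g : ℝ → ℝ)
    (hg : Tendsto g l (nhdsWithin 0 (Set.Ioi 0))) :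
    Tendsto (fun x => C / (g x) ^ p) l atTop := by
  have h1 : Tendsto (fun x => (g x) ^ p) l (nhdsWithin 0 (Set.Ioi 0)) := by
    apply tendsto_nhdsWithin_of_tendsto_nhds_of_eventually_within
    · have h0 : Tendsto g l (nhds 0) := hg.mono_right nhdsWithin_le_nhds
      simpa [zero_pow hp] using h0.pow p
    · filter_upwards [hg.eventually_mem self_mem_nhdsWithin] with x hx
      exact pow_pos (show 0 < g x from hx) p
  have h2 : Tendsto (fun x => ((g x) ^ p)⁻¹) l atTop := h1.inv_tendsto_nhdsGT_zero
  have h3 := h2.const_mul_atTop hC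
  refine h3.congr fun x => ?_
  rw [div_eq_mul_inv]

private lemma div_pow_tendsto_atBot {C : ℝ} (hC : 0 < C) (p : ℕ) (hp : p ≠ 0) (l : Filter ℝ) (g : ℝ → ℝ)
    (hg : Tendsto g l (nhdsWithin 0 (Set.Ioi 0))) :
    Tendsto (fun x => -(C / (g x) ^ p)) l atBot := by
  have := div_pow_tendsto_atTop hC p hp l g hg
  exact tendsto_neg_atTop_atBot.comp this

private lemma div_pow_tendsto_nhds {C : ℝ} (p : ℕ) (l : Filter ℝ) (g : ℝ → ℝ) {A : ℝ}
    (hA : A ≠ 0) (hg : Tendsto g l (nhds A)) :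
    Tendsto (fun x => C / (g x) ^ p) l (nhds (C / A ^ p)) :=
  tendsto_const_nhds.div (hg.pow p) (pow_ne_zero p hA)


private lemma tendsto_cases_add {l : Filter ℝ} {f g : ℝ → ℝ}
    (hf : Tendsto f l atBot ∨ ∃ L, Tendsto f l (nhds L))
    (hg : Tendsto g l atBot ∨ ∃ L, Tendsto g l (nhds L)) :
    Tendsto (fun x => f x + g x) l atBot ∨
      ∃ L, Tendsto (fun x => f x + g x) l (nhds L) := by
  rcases hf with hf | ⟨L1, hf⟩ <;> rcases hg with hg | ⟨L2, hg⟩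
  · exact Or.inl (Tendsto.atBot_add_atBot hf hg)
  · exact Or.inl (hf.atBot_add hg)
  · exact Or.inl (hf.add_atBot hg)
  · exact Or.inr ⟨L1 + L2, hf.add hg⟩

private lemma tendsto_cases_add_top {l : Filter ℝ} {f g : ℝ → ℝ}
    (hf : Tendsto f l atTop ∨ ∃ L, Tendsto f l (nhds L))
    (hg : Tendsto g l atTop ∨ ∃ L, Tendsto g l (nhds L)) :
    Tendsto (fun x => f x + g x) l atTop ∨
      ∃ L, Tendsto (fun x => f x + g x) l (nhds L) := by
  rcases hf with hf | ⟨L1, hf⟩ <;> rcases hg with hg | ⟨L2, hg⟩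
  · exact Or.inl (Tendsto.atTop_add_atTop hf hg)
  · exact Or.inl (hf.atTop_add hg)
  · exact Or.inl (hf.add_atTop hg)
  · exact Or.inr ⟨L1 + L2, hf.add hg⟩

private lemma tendsto_atBot_add_cases {l : Filter ℝ} {f g : ℝ → ℝ}
    (hf : Tendsto f l atBot)
    (hg : Tendsto g l atBot ∨ ∃ L, Tendsto g l (nhds L)) :
    Tendsto (fun x => f x + g x) l atBot := by
  rcases hg with hg | ⟨L, hg⟩
  · exact Tendsto.atBot_add_atBot hf hg
  · exact hf.atBot_add hg

private lemma tendsto_add_cases_atTop {l : Filter ℝ} {f g : ℝ → ℝ}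
    (hf : Tendsto f l atTop ∨ ∃ L, Tendsto f l (nhds L))
    (hg : Tendsto g l atTop) :
    Tendsto (fun x => f x + g x) l atTop := by
  rcases hf with hf | ⟨L, hf⟩
  · exact Tendsto.atTop_add_atTop hf hg
  · exact hf.add_atTop hg

private lemma iter_mem {T : ℝ → ℝ} (hTbij : Set.BijOn T (Set.Ico 0 1) (Set.Ico 0 1)) (k : ℕ) :
    ∀ x ∈ Set.Ico (0:ℝ) 1, T^[k] x ∈ Set.Ico (0:ℝ) 1 :=
  fun _ hx => hTbij.mapsTo.iterate k hx

private lemma Tinv_iter_mem {T Tinv : ℝ → ℝ}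
    (hTinv : ∀ x ∈ Set.Ico (0 : ℝ) 1,
      Tinv (T x) = x ∧ T (Tinv x) = x ∧ Tinv x ∈ Set.Ico (0 : ℝ) 1) :
    ∀ k, ∀ y ∈ Set.Ico (0:ℝ) 1, Tinv^[k] y ∈ Set.Ico (0:ℝ) 1 := by
  intro k
  induction k with
  | zero => intro y hy; simpa using hy
  | succ k ih =>
    intro y hy
    rw [Function.iterate_succ_apply']
    exact (hTinv _ (ih y hy)).2.2

private lemma T_Tinv_iter {T Tinv : ℝ → ℝ}
    (hTinv : ∀ x ∈ Set.Ico (0 : ℝ) 1,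
      Tinv (T x) = x ∧ T (Tinv x) = x ∧ Tinv x ∈ Set.Ico (0 : ℝ) 1) :
    ∀ k, ∀ y ∈ Set.Ico (0:ℝ) 1, T^[k] (Tinv^[k] y) = y := by
  intro k
  induction k with
  | zero => intro y _; simp
  | succ k ih =>
    intro y hy
    rw [Function.iterate_succ_apply Tinv, Function.iterate_succ_apply' T]
    have h1 : Tinv y ∈ Set.Ico (0:ℝ) 1 := (hTinv y hy).2.2
    rw [ih (Tinv y) h1]
    exact (hTinv y hy).2.1

private lemma Tinv_T_iter {T Tinv : ℝ → ℝ}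
    (hTbij : Set.BijOn T (Set.Ico 0 1) (Set.Ico 0 1))
    (hTinv : ∀ x ∈ Set.Ico (0 : ℝ) 1,
      Tinv (T x) = x ∧ T (Tinv x) = x ∧ Tinv x ∈ Set.Ico (0 : ℝ) 1) :
    ∀ k, ∀ x ∈ Set.Ico (0:ℝ) 1, Tinv^[k] (T^[k] x) = x := by
  intro k
  induction k with
  | zero => intro x _; simp
  | succ k ih =>
    intro x hx
    rw [Function.iterate_succ_apply Tinv, Function.iterate_succ_apply' T,
      (hTinv _ (iter_mem hTbij k x hx)).1]
    exact ih x hx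

private lemma beta_nonneg {r : ℕ} {β : ℕ → ℝ} (hβ0 : β 0 = 0)
    (hβmono : ∀ i j : ℕ, i < j → j ≤ r → β i < β j) :
    ∀ i, i ≤ r → 0 ≤ β i := by
  intro i hi
  rcases Nat.eq_zero_or_pos i with rfl | hpos
  · exact hβ0.ge
  · exact (hβ0 ▸ hβmono 0 i hpos hi).le

private lemma beta_le_one {r : ℕ} {β : ℕ → ℝ} (hβr : β r = 1)
    (hβmono : ∀ i j : ℕ, i < j → j ≤ r → β i < β j) :
    ∀ i, i ≤ r → β i ≤ 1 := by
  intro i hi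
  rcases eq_or_lt_of_le hi with rfl | hlt
  · exact hβr.le
  · exact (hβr ▸ hβmono i r hlt le_rfl).le

private lemma beta_pos {r : ℕ} {β : ℕ → ℝ} (hβ0 : β 0 = 0)
    (hβmono : ∀ i j : ℕ, i < j → j ≤ r → β i < β j) :
    ∀ i, 1 ≤ i → i ≤ r → 0 < β i := by
  intro i h1 h2
  exact hβ0 ▸ hβmono 0 i h1 h2

private lemma beta_mem {r : ℕ} {β : ℕ → ℝ} (hβ0 : β 0 = 0) (hβr : β r = 1)
    (hβmono : ∀ i j : ℕ, i < j → j ≤ r → β i < β j) :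
    ∀ i, i < r → β i ∈ Set.Ico (0:ℝ) 1 := by
  intro i hi
  exact ⟨beta_nonneg hβ0 hβmono i hi.le, hβr ▸ hβmono i r hi le_rfl⟩

private lemma piece {r : ℕ} {β : ℕ → ℝ} (hr : 2 ≤ r) (hβ0 : β 0 = 0) (hβr : β r = 1)
    (c d : ℝ) (hc : 0 ≤ c) (hcd : c < d) (hd : d ≤ 1)
    (hno : ∀ i, 1 ≤ i → i < r → β i ∉ Set.Ioo c d) :
    ∃ m, m < r ∧ β m ≤ c ∧ d ≤ β (m + 1) := by
  classical
  have hr0 : 0 < r := by omega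
  set s := (Finset.range r).filter (fun i => β i ≤ c) with hs
  have h0s : (0:ℕ) ∈ s := by
    simp only [hs, Finset.mem_filter, Finset.mem_range]
    exact ⟨hr0, hβ0 ▸ hc⟩
  have hne : s.Nonempty := ⟨0, h0s⟩
  set m := s.max' hne with hm
  have hms : m ∈ s := s.max'_mem hne
  have hmr : m < r := Finset.mem_range.1 (Finset.mem_filter.1 hms).1
  have hmc : β m ≤ c := (Finset.mem_filter.1 hms).2
  refine ⟨m, hmr, hmc, ?_⟩
  by_contra hlt
  push_neg at hlt
  have hcβ : c < β (m + 1) := by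
    by_contra hle
    push_neg at hle
    by_cases h : m + 1 = r
    · have : β (m + 1) = 1 := by rw [h, hβr]
      rw [this] at hle; linarith
    · have hm1r : m + 1 < r := by omega
      have hmem : m + 1 ∈ s := Finset.mem_filter.2 ⟨Finset.mem_range.2 hm1r, hle⟩
      have h5 : m + 1 ≤ m := s.le_max' _ hmem
      omega
  have hm1r : m + 1 < r := by
    by_cases h : m + 1 = r
    · exfalso
      have : β (m + 1) = 1 := by rw [h, hβr]
      rw [this] at hlt; linarith
    · omega
  exact hno (m + 1) (by omega) hm1r ⟨hcβ, hlt⟩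

private lemma periodic_finite (f : ℝ → ℝ) (x : ℝ) (n : ℕ) (hn : 1 ≤ n) (hfix : f^[n] x = x) :
    (Set.range fun m : ℕ => f^[m] x).Finite := by
  have key : ∀ m : ℕ, ∃ l, l < n ∧ f^[m] x = f^[l] x := by
    intro m
    induction m using Nat.strong_induction_on with
    | _ m ih =>
      by_cases hm : m < n
      · exact ⟨m, hm, rfl⟩
      · have h1 : m - n < m := by omega
        have h2 : f^[m] x = f^[m - n] x := by
          have h3 : f^[(m - n) + n] x = f^[m - n] (f^[n] x) := Function.iterate_add_apply f _ _ x
          rw [hfix] at h3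
          have hmn : (m - n) + n = m := by omega
          rw [hmn] at h3
          exact h3
        rcases ih (m - n) h1 with ⟨l, hl, he⟩
        exact ⟨l, hl, h2.trans he⟩
  apply Set.Finite.subset (Set.Finite.image (fun l => f^[l] x) (Set.finite_Iio n))
  rintro _ ⟨m, rfl⟩
  obtain ⟨l, hl, he⟩ := key m
  exact ⟨l, hl, he.symm⟩

private lemma no_return {r : ℕ} {β : ℕ → ℝ} {T : ℝ → ℝ} (hidoc : IDOC r β T) :
    ∀ i i' n : ℕ, 1 ≤ i → i < r → 1 ≤ i' → i' < r → 1 ≤ n → β i ≠ T^[n] (β i') := by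
  intro i i' n h1 h2 h3 h4 hn heq
  by_cases hii : i = i'
  · subst hii
    exact (hidoc.1 i h1 h2) (periodic_finite T (β i) n hn heq.symm)
  · have hmem1 : β i ∈ Set.range fun n : ℕ => T^[n] (β i) := ⟨0, rfl⟩
    have hmem2 : β i ∈ Set.range fun n : ℕ => T^[n] (β i') := ⟨n, heq.symm⟩
    exact Set.disjoint_left.1 (hidoc.2 i i' h1 h2 h3 h4 hii) hmem1 hmem2

private lemma partPts_subset {r : ℕ} {β : ℕ → ℝ} {T Tinv : ℝ → ℝ}
    (hβ0 : β 0 = 0) (hβr : β r = 1)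
    (hβmono : ∀ i j : ℕ, i < j → j ≤ r → β i < β j)
    (hTinv : ∀ x ∈ Set.Ico (0 : ℝ) 1,
      Tinv (T x) = x ∧ T (Tinv x) = x ∧ Tinv x ∈ Set.Ico (0 : ℝ) 1)
    (j : ℕ) : partPts r β Tinv j ⊆ Set.Icc 0 1 := by
  intro x hx
  rcases hx with hx | hx
  · rcases hx with rfl | hx
    · exact ⟨le_rfl, zero_le_one⟩
    · rw [Set.mem_singleton_iff] at hx; subst hx; exact ⟨zero_le_one, le_rfl⟩
  · obtain ⟨i, k, hi1, hir, _, rfl⟩ := hx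
    have := Tinv_iter_mem hTinv k (β i) (beta_mem hβ0 hβr hβmono i hir)
    exact ⟨this.1, this.2.le⟩


section Gap
variable {r : ℕ} {β : ℕ → ℝ} {T Tinv : ℝ → ℝ}

private lemma gap_trans (hr : 2 ≤ r) (hβ0 : β 0 = 0) (hβr : β r = 1)
    (hβmono : ∀ i j : ℕ, i < j → j ≤ r → β i < β j)
    (hTbij : Set.BijOn T (Set.Ico 0 1) (Set.Ico 0 1))
    (hTtrans : ∀ i : ℕ, i < r → ∃ v : ℝ, ∀ x ∈ Set.Ico (β i) (β (i + 1)), T x = x + v)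
    (hTinv : ∀ x ∈ Set.Ico (0 : ℝ) 1,
      Tinv (T x) = x ∧ T (Tinv x) = x ∧ Tinv x ∈ Set.Ico (0 : ℝ) 1)
    {j : ℕ} {a b : ℝ} (hab : IsGap (partPts r β Tinv j) a b)
    (ha0 : 0 ≤ a) (hb1 : b ≤ 1) :
    ∀ k, k < j → ∃ w, ∀ x ∈ Set.Ico a b, T^[k] x = x + w := by
  have hab' : a < b := hab.2.2.1
  intro k
  induction k with
  | zero => intro _; exact ⟨0, fun x _ => by simp⟩
  | succ k ih =>
    intro hk
    obtain ⟨w, hw⟩ := ih (by omega)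
    have hIm : ∀ x ∈ Set.Ico a b, x + w ∈ Set.Ico (0:ℝ) 1 := by
      intro x hx
      rw [← hw x hx]
      exact iter_mem hTbij k x ⟨le_trans ha0 hx.1, lt_of_lt_of_le hx.2 hb1⟩
    have hc0 : 0 ≤ a + w := (hIm a ⟨le_refl a, hab'⟩).1
    have hd1 : b + w ≤ 1 := by
      by_contra hgt
      push_neg at hgt
      have hxm : max a (1 - w) ∈ Set.Ico a b := ⟨le_max_left _ _, max_lt hab' (by linarith)⟩
      have h2 := (hIm _ hxm).2
      have h3 : 1 - w ≤ max a (1 - w) := le_max_right _ _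
      linarith
    have hno : ∀ i, 1 ≤ i → i < r → β i ∉ Set.Ioo (a + w) (b + w) := by
      intro i hi1 hir hmem
      have hx0m : β i - w ∈ Set.Ioo a b := ⟨by linarith [hmem.1], by linarith [hmem.2]⟩
      have hx0m' : β i - w ∈ Set.Ico a b := ⟨hx0m.1.le, hx0m.2⟩
      have hx01 : β i - w ∈ Set.Ico (0:ℝ) 1 :=
        ⟨le_trans ha0 hx0m'.1, lt_of_lt_of_le hx0m.2 hb1⟩
      have hT : T^[k] (β i - w) = β i := by rw [hw _ hx0m']; ring
      have hTi : Tinv^[k] (β i) = β i - w := by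
        have h9 := Tinv_T_iter hTbij hTinv k _ hx01
        rw [hT] at h9
        exact h9
      have hmem2 : β i - w ∈ partPts r β Tinv j :=
        Or.inr ⟨i, k, hi1, hir, by omega, hTi.symm⟩
      rcases hab.2.2.2 _ hmem2 with h | h
      · exact absurd hx0m.1 (not_lt.2 h)
      · exact absurd hx0m.2 (not_lt.2 h)
    obtain ⟨m, hmr, hm1, hm2⟩ :=
      piece hr hβ0 hβr (a + w) (b + w) hc0 (by linarith) hd1 hno
    obtain ⟨v, hv⟩ := hTtrans m hmr
    refine ⟨w + v, fun x hx => ?_⟩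
    rw [Function.iterate_succ_apply' T, hw x hx,
      hv (x + w) ⟨le_trans hm1 (by linarith [hx.1]), lt_of_lt_of_le (by linarith [hx.2]) hm2⟩]
    ring

private lemma gap_trans_Ioc (hr : 2 ≤ r) (hβ0 : β 0 = 0) (hβr : β r = 1)
    (hβmono : ∀ i j : ℕ, i < j → j ≤ r → β i < β j)
    (hTbij : Set.BijOn T (Set.Ico 0 1) (Set.Ico 0 1))
    (hTtrans : ∀ i : ℕ, i < r → ∃ v : ℝ, ∀ x ∈ Set.Ico (β i) (β (i + 1)), T x = x + v)
    (hTinv : ∀ x ∈ Set.Ico (0 : ℝ) 1,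
      Tinv (T x) = x ∧ T (Tinv x) = x ∧ Tinv x ∈ Set.Ico (0 : ℝ) 1)
    (hidoc : IDOC r β T)
    {j : ℕ} {a b : ℝ} (hab : IsGap (partPts r β Tinv j) a b)
    (ha0 : 0 ≤ a)
    {k0 i0 : ℕ} (hi01 : 1 ≤ i0) (hi0r : i0 < r) (hk0 : k0 < j)
    (hbdef : b = Tinv^[k0] (β i0)) :
    ∀ k, k ≤ k0 → ∃ w, ∀ x ∈ Set.Ioc a b, T^[k] x = x + w := by
  have hab' : a < b := hab.2.2.1
  have hbmem : b ∈ Set.Ico (0:ℝ) 1 := by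
    rw [hbdef]
    exact Tinv_iter_mem hTinv k0 (β i0) (beta_mem hβ0 hβr hβmono i0 hi0r)
  have hb1 : b ≤ 1 := hbmem.2.le
  have hTk0b : T^[k0] b = β i0 := by
    rw [hbdef]
    exact T_Tinv_iter hTinv k0 (β i0) (beta_mem hβ0 hβr hβmono i0 hi0r)
  intro k
  induction k with
  | zero => intro _; exact ⟨0, fun x _ => by simp⟩
  | succ k ih =>
    intro hk
    obtain ⟨w, hw⟩ := ih (by omega)
    have hIm : ∀ x ∈ Set.Ioc a b, x + w ∈ Set.Ico (0:ℝ) 1 := by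
      intro x hx
      rw [← hw x hx]
      exact iter_mem hTbij k x ⟨le_trans ha0 hx.1.le, lt_of_le_of_lt hx.2 hbmem.2⟩
    have hdb : b + w = T^[k] b := (hw b ⟨hab', le_rfl⟩).symm
    have hd1 : b + w < 1 := by
      have := hIm b ⟨hab', le_rfl⟩; exact this.2
    have hc0 : 0 ≤ a + w := by
      by_contra hgt
      push_neg at hgt
      set x := min b ((a - w) / 2) with hxdef
      have hx1 : a < x := lt_min hab' (by linarith)
      have hx2 : x ≤ b := min_le_left _ _
      have h2 := (hIm x ⟨hx1, hx2⟩).1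
      have h3 : x ≤ (a - w) / 2 := min_le_right _ _
      linarith
    have hnoc : ∀ i, 1 ≤ i → i < r → β i ∉ Set.Ioo (a + w) (b + w) := by
      intro i hi1 hir hmem
      have hx0m : β i - w ∈ Set.Ioo a b := ⟨by linarith [hmem.1], by linarith [hmem.2]⟩
      have hx0m' : β i - w ∈ Set.Ioc a b := ⟨hx0m.1, hx0m.2.le⟩
      have hx01 : β i - w ∈ Set.Ico (0:ℝ) 1 :=
        ⟨le_trans ha0 hx0m.1.le, lt_of_lt_of_le hx0m.2 hb1⟩
      have hT : T^[k] (β i - w) = β i := by rw [hw _ hx0m']; ring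
      have hTi : Tinv^[k] (β i) = β i - w := by
        have h9 := Tinv_T_iter hTbij hTinv k _ hx01
        rw [hT] at h9
        exact h9
      have hmem2 : β i - w ∈ partPts r β Tinv j :=
        Or.inr ⟨i, k, hi1, hir, by omega, hTi.symm⟩
      rcases hab.2.2.2 _ hmem2 with h | h
      · exact absurd hx0m.1 (not_lt.2 h)
      · exact absurd hx0m.2 (not_lt.2 h)
    have hne : ∀ i, 1 ≤ i → i < r → β i ≠ b + w := by
      intro i hi1 hir heq
      have hTb : T^[k] b = β i := by rw [← hdb, heq]
      have hTib : Tinv^[k] (β i) = b := by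
        have h9 := Tinv_T_iter hTbij hTinv k b hbmem
        rw [hTb] at h9
        exact h9
      have hk0k : k0 = (k0 - k) + k := by omega
      have heq2 : β i0 = T^[k0 - k] (β i) := by
        calc β i0 = T^[k0] b := hTk0b.symm
        _ = T^[(k0 - k) + k] b := by rw [← hk0k]
        _ = T^[k0 - k] (T^[k] b) := Function.iterate_add_apply T _ _ b
        _ = T^[k0 - k] (β i) := by rw [hTb]
      exact no_return hidoc i0 i (k0 - k) hi01 hi0r hi1 hir (by omega) heq2
    obtain ⟨m, hmr, hm1, hm2⟩ :=
      piece hr hβ0 hβr (a + w) (b + w) hc0 (by linarith) hd1.le hnoc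
    have hm2' : b + w < β (m + 1) := by
      rcases eq_or_lt_of_le hm2 with heq | h
      · exfalso
        by_cases h : m + 1 = r
        · have : β (m + 1) = 1 := by rw [h, hβr]
          rw [this] at heq; linarith
        · exact hne (m + 1) (by omega) (by omega) heq.symm
      · exact h
    obtain ⟨v, hv⟩ := hTtrans m hmr
    refine ⟨w + v, fun x hx => ?_⟩
    rw [Function.iterate_succ_apply' T, hw x hx,
      hv (x + w) ⟨le_trans hm1 (by linarith [hx.1]), lt_of_le_of_lt (by linarith [hx.2]) hm2'⟩]
    ring

end Gap


noncomputable def genF (r : ℕ) (β : ℕ → ℝ) (CP CM : ℕ → ℝ) (p : ℕ) (x : ℝ) : ℝ :=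
  (∑ i ∈ Finset.range r, -(CP i / (Int.fract (x - β i)) ^ p)) +
  ∑ i ∈ Finset.range r, CM (i + 1) / (Int.fract (β (i + 1) - x)) ^ p

private lemma master (r : ℕ) (hr : 2 ≤ r) (β : ℕ → ℝ) (hβ0 : β 0 = 0) (hβr : β r = 1)
    (hβmono : ∀ i j : ℕ, i < j → j ≤ r → β i < β j)
    (T Tinv : ℝ → ℝ)
    (hTbij : Set.BijOn T (Set.Ico 0 1) (Set.Ico 0 1))
    (hTtrans : ∀ i : ℕ, i < r → ∃ v : ℝ, ∀ x ∈ Set.Ico (β i) (β (i + 1)), T x = x + v)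
    (hTinv : ∀ x ∈ Set.Ico (0 : ℝ) 1,
      Tinv (T x) = x ∧ T (Tinv x) = x ∧ Tinv x ∈ Set.Ico (0 : ℝ) 1)
    (hidoc : IDOC r β T)
    (CP CM : ℕ → ℝ) (hCP : ∀ i : ℕ, i < r → 0 < CP i) (hCM : ∀ i : ℕ, i < r → 0 < CM (i + 1))
    (p : ℕ) (hp : p ≠ 0)
    (j : ℕ) (hj : 2 ≤ j) (a b : ℝ) (hab : IsGap (partPts r β Tinv j) a b) :
    StrictMonoOn (birkhoff T (genF r β CP CM p) j) (Set.Ioo a b) ∧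
      Tendsto (birkhoff T (genF r β CP CM p) j) (nhdsWithin a (Set.Ioi a)) atBot ∧
      Tendsto (birkhoff T (genF r β CP CM p) j) (nhdsWithin b (Set.Iio b)) atTop := by
  classical
  have hab' : a < b := hab.2.2.1
  have haI := partPts_subset hβ0 hβr hβmono hTinv j hab.1
  have hbI := partPts_subset hβ0 hβr hβmono hTinv j hab.2.1
  have ha0 : 0 ≤ a := haI.1
  have hb1 : b ≤ 1 := hbI.2
  have hW : ∀ k, k < j → ∃ w, ∀ x ∈ Set.Ico a b, T^[k] x = x + w :=
    gap_trans hr hβ0 hβr hβmono hTbij hTtrans hTinv hab ha0 hb1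
  choose! w hw using hW
  have himg : ∀ k, k < j → ∀ x ∈ Set.Ico a b, x + w k ∈ Set.Ico (0:ℝ) 1 := by
    intro k hk x hx
    rw [← hw k hk x hx]
    exact iter_mem hTbij k x ⟨le_trans ha0 hx.1, lt_of_lt_of_le hx.2 hb1⟩
  have haw : ∀ k, k < j → 0 ≤ a + w k := fun k hk => (himg k hk a ⟨le_rfl, hab'⟩).1
  have hwpos : ∀ k, k < j → ∀ x ∈ Set.Ioo a b, 0 < x + w k := by
    intro k hk x hx
    have := haw k hk
    linarith [hx.1]
  have hwlt1 : ∀ k, k < j → ∀ x ∈ Set.Ioo a b, x + w k < 1 := by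
    intro k hk x hx
    exact (himg k hk x ⟨hx.1.le, hx.2⟩).2
  have hnoβ : ∀ k, k < j → ∀ x ∈ Set.Ioo a b, ∀ i, i ≤ r → x + w k ≠ β i := by
    intro k hk x hx i hir heq
    have hxIco : x ∈ Set.Ico a b := ⟨hx.1.le, hx.2⟩
    rcases Nat.eq_zero_or_pos i with rfl | hi1
    · rw [hβ0] at heq
      exact absurd heq (ne_of_gt (hwpos k hk x hx))
    · rcases eq_or_lt_of_le hir with rfl | hirlt
      · rw [hβr] at heq
        exact absurd heq (ne_of_lt (hwlt1 k hk x hx))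
      · have hx01 : x ∈ Set.Ico (0:ℝ) 1 := ⟨le_trans ha0 hx.1.le, lt_of_lt_of_le hx.2 hb1⟩
        have hT : T^[k] x = β i := by rw [hw k hk x hxIco]; exact heq
        have hTi : Tinv^[k] (β i) = x := by
          have h9 := Tinv_T_iter hTbij hTinv k x hx01
          rw [hT] at h9
          exact h9
        have hmem2 : x ∈ partPts r β Tinv j := Or.inr ⟨i, k, hi1, hirlt, hk, hTi.symm⟩
        rcases hab.2.2.2 x hmem2 with h | h
        · exact absurd hx.1 (not_lt.2 h)
        · exact absurd hx.2 (not_lt.2 h)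
  set e1 : ℕ → ℕ → ℝ := fun k i => if a + w k - β i < 0 then 1 else 0 with he1
  set e2 : ℕ → ℕ → ℝ := fun k i => if β (i + 1) - b - w k < 0 then 1 else 0 with he2
  have hu1 : ∀ k, k < j → ∀ i, i < r → ∀ x ∈ Set.Ioo a b,
      Int.fract (x + w k - β i) = x + w k - β i + e1 k i ∧
      0 < x + w k - β i + e1 k i ∧ x + w k - β i + e1 k i < 1 := by
    intro k hk i hir x hx
    have h1 : 0 < x + w k := hwpos k hk x hx
    have h2 : x + w k < 1 := hwlt1 k hk x hx
    have h3 : 0 ≤ β i := beta_nonneg hβ0 hβmono i hir.le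
    have h4 : β i ≤ 1 := beta_le_one hβr hβmono i hir.le
    have hne := hnoβ k hk x hx i hir.le
    simp only [he1]
    by_cases hD : a + w k - β i < 0
    · rw [if_pos hD]
      have ht0 : x + w k - β i < 0 := by
        by_contra hge
        push_neg at hge
        have htne : x + w k - β i ≠ 0 := sub_ne_zero.2 hne
        have htpos : 0 < x + w k - β i := lt_of_le_of_ne hge (Ne.symm htne)
        have hxs : β i - w k ∈ Set.Ioo a b := ⟨by linarith, lt_trans (by linarith) hx.2⟩
        exact hnoβ k hk _ hxs i hir.le (by ring)
      exact ⟨fract_neg_case (by linarith) ht0, by linarith, by linarith⟩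
    · rw [if_neg hD]
      push_neg at hD
      have htpos : 0 < x + w k - β i := by linarith [hx.1]
      exact ⟨by rw [fract_pos_case htpos (by linarith)]; ring, by linarith, by linarith⟩
  have hu2 : ∀ k, k < j → ∀ i, i < r → ∀ x ∈ Set.Ioo a b,
      Int.fract (β (i + 1) - (x + w k)) = β (i + 1) - (x + w k) + e2 k i ∧
      0 < β (i + 1) - (x + w k) + e2 k i ∧ β (i + 1) - (x + w k) + e2 k i < 1 := by
    intro k hk i hir x hx
    have h1 : 0 < x + w k := hwpos k hk x hx
    have h2 : x + w k < 1 := hwlt1 k hk x hx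
    have h3 : 0 < β (i + 1) := beta_pos hβ0 hβmono (i + 1) (by omega) (by omega)
    have h4 : β (i + 1) ≤ 1 := beta_le_one hβr hβmono (i + 1) (by omega)
    have hne := hnoβ k hk x hx (i + 1) (by omega)
    simp only [he2]
    by_cases hD : β (i + 1) - b - w k < 0
    · rw [if_pos hD]
      have ht0 : β (i + 1) - (x + w k) < 0 := by
        by_contra hge
        push_neg at hge
        have htne : β (i + 1) - (x + w k) ≠ 0 := sub_ne_zero.2 (Ne.symm hne)
        have htpos : 0 < β (i + 1) - (x + w k) := lt_of_le_of_ne hge (Ne.symm htne)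
        have hxs : β (i + 1) - w k ∈ Set.Ioo a b := ⟨lt_trans hx.1 (by linarith), by linarith⟩
        exact hnoβ k hk _ hxs (i + 1) (by omega) (by ring)
      exact ⟨fract_neg_case (by linarith) ht0, by linarith, by linarith⟩
    · rw [if_neg hD]
      push_neg at hD
      have htpos : 0 < β (i + 1) - (x + w k) := by linarith [hx.2]
      exact ⟨by rw [fract_pos_case htpos (by linarith)]; ring, by linarith, by linarith⟩
  have hbk : ∀ x ∈ Set.Ioo a b,
      birkhoff T (genF r β CP CM p) j x =
      ∑ k ∈ Finset.range j,
        ((∑ i ∈ Finset.range r, -(CP i / (x + w k - β i + e1 k i) ^ p)) +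
          ∑ i ∈ Finset.range r, CM (i + 1) / (β (i + 1) - (x + w k) + e2 k i) ^ p) := by
    intro x hx
    unfold birkhoff genF
    refine Finset.sum_congr rfl fun k hk => ?_
    have hkj := Finset.mem_range.1 hk
    rw [hw k hkj x ⟨hx.1.le, hx.2⟩]
    congr 1
    · refine Finset.sum_congr rfl fun i hi => ?_
      rw [(hu1 k hkj i (Finset.mem_range.1 hi) x hx).1]
    · refine Finset.sum_congr rfl fun i hi => ?_
      rw [(hu2 k hkj i (Finset.mem_range.1 hi) x hx).1]
  -- blow-up witnesses
  have hw0 : w 0 = 0 := by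
    have h := hw 0 (by omega) a ⟨le_rfl, hab'⟩
    simp only [Function.iterate_zero, id_eq] at h
    linarith
  have hblowa : ∃ k0, k0 < j ∧ ∃ i0, i0 < r ∧ a + w k0 - β i0 + e1 k0 i0 = 0 := by
    have hmem := hab.1
    simp only [partPts, Set.mem_union, Set.mem_insert_iff, Set.mem_singleton_iff,
      Set.mem_setOf_eq] at hmem
    rcases hmem with (h0 | h1) | ⟨i0, k0, hi01, hi0r, hk0, heq⟩
    · refine ⟨0, by omega, 0, by omega, ?_⟩
      have hD : a + w 0 - β 0 = 0 := by rw [h0, hw0, hβ0]; ring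
      simp only [he1]
      rw [hD]
      simp
    · exfalso
      rw [h1] at hab'
      linarith
    · refine ⟨k0, hk0, i0, hi0r, ?_⟩
      have hD : a + w k0 = β i0 := by
        rw [← hw k0 hk0 a ⟨le_rfl, hab'⟩, heq]
        exact T_Tinv_iter hTinv k0 (β i0) (beta_mem hβ0 hβr hβmono i0 hi0r)
      have hD' : a + w k0 - β i0 = 0 := by rw [hD]; ring
      simp only [he1]
      rw [hD']
      simp
  have hblowb : ∃ k0, k0 < j ∧ ∃ i0, i0 < r ∧ β (i0 + 1) - (b + w k0) + e2 k0 i0 = 0 := by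
    have hmem := hab.2.1
    simp only [partPts, Set.mem_union, Set.mem_insert_iff, Set.mem_singleton_iff,
      Set.mem_setOf_eq] at hmem
    rcases hmem with (h0 | h1) | ⟨i0, k0, hi01, hi0r, hk0, heq⟩
    · exfalso
      rw [h0] at hab'
      linarith
    · refine ⟨0, by omega, r - 1, by omega, ?_⟩
      have hrr : r - 1 + 1 = r := by omega
      have hD : β (r - 1 + 1) - b - w 0 = 0 := by rw [hrr, hβr, h1, hw0]; ring
      simp only [he2]
      rw [hD]
      have hD2 : β (r - 1 + 1) - (b + w 0) = 0 := by rw [hrr, hβr, h1, hw0]; ring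
      rw [hD2]
      simp
    · obtain ⟨w', hw'⟩ := gap_trans_Ioc hr hβ0 hβr hβmono hTbij hTtrans hTinv hidoc hab ha0
        hi01 hi0r hk0 heq k0 le_rfl
      have hx0 : (a + b) / 2 ∈ Set.Ioo a b := ⟨by linarith, by linarith⟩
      have hweq : w k0 = w' := by
        have h5 := hw k0 hk0 ((a + b) / 2) ⟨hx0.1.le, hx0.2⟩
        have h6 := hw' ((a + b) / 2) ⟨hx0.1, hx0.2.le⟩
        linarith [h5.symm.trans h6]
      have hD : b + w k0 = β i0 := by
        rw [hweq, ← hw' b ⟨hab', le_rfl⟩, heq]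
        exact T_Tinv_iter hTinv k0 (β i0) (beta_mem hβ0 hβr hβmono i0 hi0r)
      refine ⟨k0, hk0, i0 - 1, by omega, ?_⟩
      have hii : i0 - 1 + 1 = i0 := by omega
      have hD1 : β (i0 - 1 + 1) - b - w k0 = 0 := by rw [hii]; linarith
      have hD2 : β (i0 - 1 + 1) - (b + w k0) = 0 := by rw [hii]; linarith
      simp only [he2]
      rw [hD1, hD2]
      simp
  refine ⟨?_, ?_, ?_⟩
  · -- strict monotonicity
    intro x1 hx1 x2 hx2 hlt
    rw [hbk x1 hx1, hbk x2 hx2]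
    refine Finset.sum_lt_sum_of_nonempty ⟨0, Finset.mem_range.2 (by omega)⟩ fun k hk => ?_
    have hkj := Finset.mem_range.1 hk
    have hrne : (Finset.range r).Nonempty := ⟨0, Finset.mem_range.2 (by omega)⟩
    refine add_lt_add (Finset.sum_lt_sum_of_nonempty hrne fun i hi => ?_)
      (Finset.sum_lt_sum_of_nonempty hrne fun i hi => ?_)
    · have hir := Finset.mem_range.1 hi
      have h1 := hu1 k hkj i hir x1 hx1
      have h2 := hu1 k hkj i hir x2 hx2
      have huv : x1 + w k - β i + e1 k i < x2 + w k - β i + e1 k i := by linarith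
      have hd := div_lt_div_of_pos_left (hCP i hir) (pow_pos h1.2.1 p)
        (pow_lt_pow_left₀ huv h1.2.1.le hp)
      linarith
    · have hir := Finset.mem_range.1 hi
      have h1 := hu2 k hkj i hir x1 hx1
      have h2 := hu2 k hkj i hir x2 hx2
      have huv : β (i + 1) - (x2 + w k) + e2 k i < β (i + 1) - (x1 + w k) + e2 k i := by
        linarith
      exact div_lt_div_of_pos_left (hCM i hir) (pow_pos h2.2.1 p)
        (pow_lt_pow_left₀ huv h2.2.1.le hp)
  · -- tendsto atBot at a
    set l := nhdsWithin a (Set.Ioi a) with hl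
    have hIoo : Set.Ioo a b ∈ l := Ioo_mem_nhdsGT hab'
    have hA1nonneg : ∀ k, k < j → ∀ i, i < r → 0 ≤ a + w k - β i + e1 k i := by
      intro k hk i hir
      by_contra hneg
      push_neg at hneg
      have hx : min (a - (a + w k - β i + e1 k i)) ((a + b) / 2) ∈ Set.Ioo a b :=
        ⟨lt_min (by linarith) (by linarith), lt_of_le_of_lt (min_le_right _ _) (by linarith)⟩
      have h5 := (hu1 k hk i hir _ hx).2.1
      have h6 : min (a - (a + w k - β i + e1 k i)) ((a + b) / 2) ≤
          a - (a + w k - β i + e1 k i) := min_le_left _ _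
      linarith
    have hatom1aZ : ∀ k, k < j → ∀ i, i < r → a + w k - β i + e1 k i = 0 →
        Tendsto (fun x => -(CP i / (x + w k - β i + e1 k i) ^ p)) l atBot := by
      intro k hk i hir hA
      apply div_pow_tendsto_atBot (hCP i hir) p hp
      apply tendsto_nhdsWithin_of_tendsto_nhds_of_eventually_within
      · have hcont : Tendsto (fun x : ℝ => x + w k - β i + e1 k i) l
            (nhds (a + w k - β i + e1 k i)) :=
          ((((continuous_id.add continuous_const).sub continuous_const).add
            continuous_const).tendsto a).mono_left nhdsWithin_le_nhds
        rw [hA] at hcont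
        exact hcont
      · filter_upwards [hIoo] with x hx
        exact (hu1 k hk i hir x hx).2.1
    have hatom1a : ∀ k, k < j → ∀ i, i < r →
        Tendsto (fun x => -(CP i / (x + w k - β i + e1 k i) ^ p)) l atBot ∨
        ∃ L, Tendsto (fun x => -(CP i / (x + w k - β i + e1 k i) ^ p)) l (nhds L) := by
      intro k hk i hir
      rcases eq_or_lt_of_le (hA1nonneg k hk i hir) with hA | hA
      · exact Or.inl (hatom1aZ k hk i hir hA.symm)
      · right
        have hcont : Tendsto (fun x : ℝ => x + w k - β i + e1 k i) l
            (nhds (a + w k - β i + e1 k i)) :=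
          ((((continuous_id.add continuous_const).sub continuous_const).add
            continuous_const).tendsto a).mono_left nhdsWithin_le_nhds
        exact ⟨_, (div_pow_tendsto_nhds (C := CP i) p l _ (ne_of_gt hA) hcont).neg⟩
    have hatom2a : ∀ k, k < j → ∀ i, i < r →
        ∃ L, Tendsto (fun x => CM (i + 1) / (β (i + 1) - (x + w k) + e2 k i) ^ p) l (nhds L) := by
      intro k hk i hir
      have hx0 : (a + b) / 2 ∈ Set.Ioo a b := ⟨by linarith, by linarith⟩
      have hpos := (hu2 k hk i hir _ hx0).2.1
      have hApos : 0 < β (i + 1) - (a + w k) + e2 k i := by linarith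
      have hcont : Tendsto (fun x : ℝ => β (i + 1) - (x + w k) + e2 k i) l
          (nhds (β (i + 1) - (a + w k) + e2 k i)) :=
        (((continuous_const.sub (continuous_id.add continuous_const)).add
          continuous_const).tendsto a).mono_left nhdsWithin_le_nhds
      exact ⟨_, div_pow_tendsto_nhds (C := CM (i + 1)) p l _ (ne_of_gt hApos) hcont⟩
    obtain ⟨k0, hk0, i0, hi0, hA0⟩ := hblowa
    have hGK : ∀ k, k < j →
        Tendsto (fun x => (∑ i ∈ Finset.range r, -(CP i / (x + w k - β i + e1 k i) ^ p)) +
          ∑ i ∈ Finset.range r, CM (i + 1) / (β (i + 1) - (x + w k) + e2 k i) ^ p) l atBot ∨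
        ∃ L, Tendsto (fun x => (∑ i ∈ Finset.range r, -(CP i / (x + w k - β i + e1 k i) ^ p)) +
          ∑ i ∈ Finset.range r, CM (i + 1) / (β (i + 1) - (x + w k) + e2 k i) ^ p) l (nhds L) := by
      intro k hk
      exact tendsto_cases_add
        (sum_tendsto_cases l (Finset.range r) _
          (fun i hi => hatom1a k hk i (Finset.mem_range.1 hi)))
        (sum_tendsto_cases l (Finset.range r) _
          (fun i hi => Or.inr (hatom2a k hk i (Finset.mem_range.1 hi))))
    have hGK0 : Tendsto (fun x =>
        (∑ i ∈ Finset.range r, -(CP i / (x + w k0 - β i + e1 k0 i) ^ p)) +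
          ∑ i ∈ Finset.range r, CM (i + 1) / (β (i + 1) - (x + w k0) + e2 k0 i) ^ p) l atBot := by
      apply tendsto_atBot_add_cases
      · exact sum_tendsto_atBot' l (Finset.range r) _
          (fun i hi => hatom1a k0 hk0 i (Finset.mem_range.1 hi)) i0 (Finset.mem_range.2 hi0)
          (hatom1aZ k0 hk0 i0 hi0 hA0)
      · exact sum_tendsto_cases l (Finset.range r) _
          (fun i hi => Or.inr (hatom2a k0 hk0 i (Finset.mem_range.1 hi)))
    have houter := sum_tendsto_atBot' l (Finset.range j) _
      (fun k hk => hGK k (Finset.mem_range.1 hk)) k0 (Finset.mem_range.2 hk0) hGK0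
    exact houter.congr' (eventuallyEq_of_mem hIoo fun x hx => (hbk x hx).symm)
  · -- tendsto atTop at b
    set l := nhdsWithin b (Set.Iio b) with hl
    have hIoo : Set.Ioo a b ∈ l := Ioo_mem_nhdsLT hab'
    have hB1pos : ∀ k, k < j → ∀ i, i < r → 0 < b + w k - β i + e1 k i := by
      intro k hk i hir
      have hx0 : (a + b) / 2 ∈ Set.Ioo a b := ⟨by linarith, by linarith⟩
      have hpos := (hu1 k hk i hir _ hx0).2.1
      linarith
    have hB2nonneg : ∀ k, k < j → ∀ i, i < r → 0 ≤ β (i + 1) - (b + w k) + e2 k i := by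
      intro k hk i hir
      by_contra hneg
      push_neg at hneg
      have hx : max ((a + b) / 2) (b + (β (i + 1) - (b + w k) + e2 k i)) ∈ Set.Ioo a b :=
        ⟨lt_of_lt_of_le (by linarith) (le_max_left _ _), max_lt (by linarith) (by linarith)⟩
      have h5 := (hu2 k hk i hir _ hx).2.1
      have h6 : b + (β (i + 1) - (b + w k) + e2 k i) ≤
          max ((a + b) / 2) (b + (β (i + 1) - (b + w k) + e2 k i)) := le_max_right _ _
      linarith
    have hatom2bZ : ∀ k, k < j → ∀ i, i < r → β (i + 1) - (b + w k) + e2 k i = 0 →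
        Tendsto (fun x => CM (i + 1) / (β (i + 1) - (x + w k) + e2 k i) ^ p) l atTop := by
      intro k hk i hir hB
      apply div_pow_tendsto_atTop (hCM i hir) p hp
      apply tendsto_nhdsWithin_of_tendsto_nhds_of_eventually_within
      · have hcont : Tendsto (fun x : ℝ => β (i + 1) - (x + w k) + e2 k i) l
            (nhds (β (i + 1) - (b + w k) + e2 k i)) :=
          (((continuous_const.sub (continuous_id.add continuous_const)).add
            continuous_const).tendsto b).mono_left nhdsWithin_le_nhds
        rw [hB] at hcont
        exact hcont
      · filter_upwards [hIoo] with x hx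
        exact (hu2 k hk i hir x hx).2.1
    have hatom2b : ∀ k, k < j → ∀ i, i < r →
        Tendsto (fun x => CM (i + 1) / (β (i + 1) - (x + w k) + e2 k i) ^ p) l atTop ∨
        ∃ L, Tendsto (fun x => CM (i + 1) / (β (i + 1) - (x + w k) + e2 k i) ^ p) l (nhds L) := by
      intro k hk i hir
      rcases eq_or_lt_of_le (hB2nonneg k hk i hir) with hB | hB
      · exact Or.inl (hatom2bZ k hk i hir hB.symm)
      · right
        have hcont : Tendsto (fun x : ℝ => β (i + 1) - (x + w k) + e2 k i) l
            (nhds (β (i + 1) - (b + w k) + e2 k i)) :=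
          (((continuous_const.sub (continuous_id.add continuous_const)).add
            continuous_const).tendsto b).mono_left nhdsWithin_le_nhds
        exact ⟨_, div_pow_tendsto_nhds (C := CM (i + 1)) p l _ (ne_of_gt hB) hcont⟩
    have hatom1b : ∀ k, k < j → ∀ i, i < r →
        ∃ L, Tendsto (fun x => -(CP i / (x + w k - β i + e1 k i) ^ p)) l (nhds L) := by
      intro k hk i hir
      have hcont : Tendsto (fun x : ℝ => x + w k - β i + e1 k i) l
          (nhds (b + w k - β i + e1 k i)) :=
        ((((continuous_id.add continuous_const).sub continuous_const).add
          continuous_const).tendsto b).mono_left nhdsWithin_le_nhds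
      exact ⟨_, (div_pow_tendsto_nhds (C := CP i) p l _ (ne_of_gt (hB1pos k hk i hir)) hcont).neg⟩
    obtain ⟨k0, hk0, i0, hi0, hB0⟩ := hblowb
    have hGK : ∀ k, k < j →
        Tendsto (fun x => (∑ i ∈ Finset.range r, -(CP i / (x + w k - β i + e1 k i) ^ p)) +
          ∑ i ∈ Finset.range r, CM (i + 1) / (β (i + 1) - (x + w k) + e2 k i) ^ p) l atTop ∨
        ∃ L, Tendsto (fun x => (∑ i ∈ Finset.range r, -(CP i / (x + w k - β i + e1 k i) ^ p)) +
          ∑ i ∈ Finset.range r, CM (i + 1) / (β (i + 1) - (x + w k) + e2 k i) ^ p) l (nhds L) := by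
      intro k hk
      exact tendsto_cases_add_top
        (sum_tendsto_cases_top l (Finset.range r) _
          (fun i hi => Or.inr (hatom1b k hk i (Finset.mem_range.1 hi))))
        (sum_tendsto_cases_top l (Finset.range r) _
          (fun i hi => hatom2b k hk i (Finset.mem_range.1 hi)))
    have hGK0 : Tendsto (fun x =>
        (∑ i ∈ Finset.range r, -(CP i / (x + w k0 - β i + e1 k0 i) ^ p)) +
          ∑ i ∈ Finset.range r, CM (i + 1) / (β (i + 1) - (x + w k0) + e2 k0 i) ^ p) l atTop := by
      apply tendsto_add_cases_atTop
      · exact sum_tendsto_cases_top l (Finset.range r) _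
          (fun i hi => Or.inr (hatom1b k0 hk0 i (Finset.mem_range.1 hi)))
      · exact sum_tendsto_atTop' l (Finset.range r) _
          (fun i hi => hatom2b k0 hk0 i (Finset.mem_range.1 hi)) i0 (Finset.mem_range.2 hi0)
          (hatom2bZ k0 hk0 i0 hi0 hB0)
    have houter := sum_tendsto_atTop' l (Finset.range j) _
      (fun k hk => hGK k (Finset.mem_range.1 hk)) k0 (Finset.mem_range.2 hk0) hGK0
    exact houter.congr' (eventuallyEq_of_mem hIoo fun x hx => (hbk x hx).symm)

/-- Lemma 4.1: for every `j ≥ 2` and every subinterval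
`Δ_i^j = (x_i^j, x_{i+1}^j)` of the partition `P_j`, the Birkhoff sum `f'^{(j)}` is
strictly increasing on `Δ_i^j`, tends to `-∞` at the left endpoint and to `+∞` at the
right endpoint; and the same holds for `f'''^{(j)}`. -/
theorem stmt2
    (r : ℕ) (hr : 2 ≤ r)
    (β : ℕ → ℝ) (hβ0 : β 0 = 0) (hβr : β r = 1)
    (hβmono : ∀ i j : ℕ, i < j → j ≤ r → β i < β j)
    (T Tinv : ℝ → ℝ)
    (hTbij : Set.BijOn T (Set.Ico 0 1) (Set.Ico 0 1))
    (hTtrans : ∀ i : ℕ, i < r → ∃ v : ℝ, ∀ x ∈ Set.Ico (β i) (β (i + 1)), T x = x + v)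
    (hTinv : ∀ x ∈ Set.Ico (0 : ℝ) 1,
      Tinv (T x) = x ∧ T (Tinv x) = x ∧ Tinv x ∈ Set.Ico (0 : ℝ) 1)
    (hidoc : IDOC r β T)
    (cp cm : ℕ → ℝ)
    (hcp : ∀ i : ℕ, i < r → 0 < cp i) (hcm : ∀ i : ℕ, i < r → 0 < cm (i + 1)) :
    ∀ j : ℕ, 2 ≤ j → ∀ a b : ℝ, IsGap (partPts r β Tinv j) a b →
      (StrictMonoOn (birkhoff T (logfD r β cp cm) j) (Set.Ioo a b) ∧
        Tendsto (birkhoff T (logfD r β cp cm) j) (nhdsWithin a (Set.Ioi a)) atBot ∧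
        Tendsto (birkhoff T (logfD r β cp cm) j) (nhdsWithin b (Set.Iio b)) atTop) ∧
      (StrictMonoOn (birkhoff T (logfD3 r β cp cm) j) (Set.Ioo a b) ∧
        Tendsto (birkhoff T (logfD3 r β cp cm) j) (nhdsWithin a (Set.Ioi a)) atBot ∧
        Tendsto (birkhoff T (logfD3 r β cp cm) j) (nhdsWithin b (Set.Iio b)) atTop)  := by
  intro j hj a b hab
  have h1 : logfD r β cp cm = genF r β cp cm 1 := by
    funext x
    simp only [logfD, genF, pow_one]
  have h3 : logfD3 r β cp cm = genF r β (fun i => 2 * cp i) (fun i => 2 * cm i) 3 := rfl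
  constructor
  · rw [h1]
    exact master r hr β hβ0 hβr hβmono T Tinv hTbij hTtrans hTinv hidoc cp cm hcp hcm 1
      one_ne_zero j hj a b hab
  · rw [h3]
    exact master r hr β hβ0 hβr hβmono T Tinv hTbij hTtrans hTinv hidoc _ _
      (fun i hi => mul_pos two_pos (hcp i hi))
      (fun i hi => mul_pos two_pos (hcm i hi)) 3 (by norm_num) j hj a b hab
end

section
/- Let H = {h_α : (a_α, b_α) → ℝ : α ∈ A} be a family of monotone, differentiable, convex functions defined on bounded open intervals (a_α, b_α) ⊂ ℝ. Suppose that for every 0 < η < 1 there exists δ̃ > 0 such that for every α ∈ A, the Lebesgue measure of {x ∈ (a_α, b_α) : |h_α′(x)| > δ̃/(b_α − a_α)} is greater than η(b_α − a_α). Then for every 0 < η̃ < 1 there exists ε > 0 such that for every t > 0 and every α ∈ A, the Lebesgue measure of {x ∈ (a_α, b_α) : |h_α(x) − t| < 2ε} is at most η̃(b_α − a_α). -/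
open MeasureTheory Filter Set Topology

lemma deriv_nonneg_of_monotoneOn {f : ℝ → ℝ} {s : Set ℝ} (hs : IsOpen s)
    (hm : MonotoneOn f s) {x : ℝ} (hx : x ∈ s) (hd : DifferentiableAt ℝ f x) :
    0 ≤ deriv f x := by
  have hsl : Tendsto (slope f x) (𝓝[≠] x) (𝓝 (deriv f x)) :=
    hasDerivAt_iff_tendsto_slope.mp hd.hasDerivAt
  have hle : 𝓝[>] x ≤ 𝓝[≠] x := nhdsWithin_mono _ (fun y hy => ne_of_gt hy)
  refine ge_of_tendsto (hsl.mono_left hle) ?_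
  have hmem : ∀ᶠ y in 𝓝[>] x, y ∈ s :=
    eventually_nhdsWithin_of_eventually_nhds (hs.eventually_mem hx)
  filter_upwards [hmem, self_mem_nhdsWithin] with y hy (hy' : x < y)
  rw [slope_def_field]
  exact div_nonneg (sub_nonneg.2 (hm hx hy hy'.le)) (sub_nonneg.2 hy'.le)

lemma deriv_nonpos_of_antitoneOn {f : ℝ → ℝ} {s : Set ℝ} (hs : IsOpen s)
    (hm : AntitoneOn f s) {x : ℝ} (hx : x ∈ s) (hd : DifferentiableAt ℝ f x) :
    deriv f x ≤ 0 := by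
  have := deriv_nonneg_of_monotoneOn hs hm.neg hx hd.neg
  rwa [deriv.fun_neg, neg_nonneg] at this

lemma exists_gap {S : Set ℝ} {L : ℝ} (hL : 0 < L) (hbd : BddBelow S)
    (hvol : ENNReal.ofReal L < volume S) : ∃ x ∈ S, ∃ y ∈ S, L < y - x := by
  by_contra hcon
  push_neg at hcon
  have hne : S.Nonempty := by
    rcases S.eq_empty_or_nonempty with rfl | hne
    · rw [measure_empty] at hvol
      exact absurd hvol (not_lt.2 zero_le)
    · exact hne
  have hsub : S ⊆ Set.Icc (sInf S) (sInf S + L) := by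
    intro y hy
    refine ⟨csInf_le hbd hy, ?_⟩
    have h1 : ∀ x ∈ S, y - L ≤ x := fun x hx => by linarith [hcon x hx y hy]
    have := le_csInf hne h1
    linarith
  have hle : volume S ≤ volume (Set.Icc (sInf S) (sInf S + L)) := measure_mono hsub
  rw [Real.volume_Icc, add_sub_cancel_left] at hle
  exact (hvol.trans_le hle).false

/-- Lemma 4.4: let `{h_α : (a_α, b_α) → ℝ}` be a family of monotone,
differentiable, convex functions on bounded open intervals. If for every `0 < η < 1`
there is `δ̃ > 0` such that for every `α` the Lebesgue measure of
`{x ∈ (a_α, b_α) : |h_α'(x)| > δ̃/(b_α - a_α)}` exceeds `η (b_α - a_α)`, then for every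
`0 < η̃ < 1` there is `ε > 0` such that for every `t > 0` and every `α`, the Lebesgue
measure of `{x ∈ (a_α, b_α) : |h_α(x) - t| < 2ε}` is at most `η̃ (b_α - a_α)`. -/
theorem stmt3 {A : Type*} (a b : A → ℝ) (h : A → ℝ → ℝ)
    (hab : ∀ α : A, a α < b α)
    (hmono : ∀ α : A, MonotoneOn (h α) (Set.Ioo (a α) (b α)) ∨
      AntitoneOn (h α) (Set.Ioo (a α) (b α)))
    (hdiff : ∀ α : A, DifferentiableOn ℝ (h α) (Set.Ioo (a α) (b α)))
    (hconv : ∀ α : A, ConvexOn ℝ (Set.Ioo (a α) (b α)) (h α))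
    (hyp : ∀ η : ℝ, 0 < η → η < 1 → ∃ δ > (0 : ℝ), ∀ α : A,
      ENNReal.ofReal (η * (b α - a α)) <
        volume {x ∈ Set.Ioo (a α) (b α) | δ / (b α - a α) < |deriv (h α) x|}) :
    ∀ η' : ℝ, 0 < η' → η' < 1 → ∃ ε > (0 : ℝ), ∀ t : ℝ, 0 < t → ∀ α : A,
      volume {x ∈ Set.Ioo (a α) (b α) | |h α x - t| < 2 * ε}
        ≤ ENNReal.ofReal (η' * (b α - a α)) := by
  intro η' hη'0 hη'1
  obtain ⟨δ, hδ, hGvol⟩ := hyp (1 - η' / 2) (by linarith) (by linarith)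
  refine ⟨δ * η' / 16, by positivity, fun t ht α => ?_⟩
  by_contra hcon
  push_neg at hcon
  have hba : 0 < b α - a α := sub_pos.2 (hab α)
  set ε : ℝ := δ * η' / 16 with hε
  set I : Set ℝ := Set.Ioo (a α) (b α) with hI
  set B : Set ℝ := {x ∈ I | |h α x - t| < 2 * ε} with hBdef
  set G : Set ℝ := {x ∈ I | δ / (b α - a α) < |deriv (h α) x|} with hGdef
  have hGm : MeasurableSet G := by
    have hGeq : G = I ∩ {x | δ / (b α - a α) < |deriv (h α) x|} := rfl
    rw [hGeq, hI]
    exact measurableSet_Ioo.inter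
      (measurableSet_lt measurable_const (measurable_deriv _).abs)
  have hBsub : B ⊆ I := fun x hx => hx.1
  have hGsub : G ⊆ I := fun x hx => hx.1
  have hIvol : volume I = ENNReal.ofReal (b α - a α) := Real.volume_Ioo
  have hunion : volume (B ∪ G) ≤ ENNReal.ofReal (b α - a α) := by
    rw [← hIvol]; exact measure_mono (union_subset hBsub hGsub)
  have hie : volume (B ∪ G) + volume (B ∩ G) = volume B + volume G :=
    measure_union_add_inter B hGm
  have key : ENNReal.ofReal (η' / 2 * (b α - a α)) < volume (B ∩ G) := by
    by_contra hk
    push_neg at hk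
    have h1 : ENNReal.ofReal (η' * (b α - a α)) + ENNReal.ofReal ((1 - η' / 2) * (b α - a α))
        < volume B + volume G := ENNReal.add_lt_add hcon (hGvol α)
    rw [← hie] at h1
    have h2 : volume (B ∪ G) + volume (B ∩ G)
        ≤ ENNReal.ofReal (b α - a α) + ENNReal.ofReal (η' / 2 * (b α - a α)) :=
      add_le_add hunion hk
    have h3 := h1.trans_le h2
    rw [← ENNReal.ofReal_add (by nlinarith) (by nlinarith),
        ← ENNReal.ofReal_add (by nlinarith) (by nlinarith)] at h3
    have h4 := (ENNReal.ofReal_lt_ofReal_iff_of_nonneg (by nlinarith)).mp h3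
    nlinarith
  obtain ⟨x, hxS, y, hyS, hxy⟩ :=
    exists_gap (L := η' / 2 * (b α - a α)) (by positivity)
      ⟨a α, fun z hz => (hz.1.1.1).le⟩ key
  have hxI : x ∈ I := hxS.1.1
  have hyI : y ∈ I := hyS.1.1
  have hxlt : x < y := by nlinarith
  have hxB : |h α x - t| < 2 * ε := hxS.1.2
  have hyB : |h α y - t| < 2 * ε := hyS.1.2
  have habs : |h α y - h α x| < 4 * ε := by
    rw [abs_lt] at hxB hyB ⊢
    constructor <;> linarith [hxB.1, hxB.2, hyB.1, hyB.2]
  have hcL : δ / (b α - a α) * (η' / 2 * (b α - a α)) = δ * η' / 2 := by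
    field_simp
  have hεlt : 4 * ε < δ * η' / 2 := by nlinarith
  rcases hmono α with hm | hm
  · have hdx : DifferentiableAt ℝ (h α) x :=
      (hdiff α x hxI).differentiableAt (isOpen_Ioo.mem_nhds hxI)
    have hd0 : 0 ≤ deriv (h α) x := deriv_nonneg_of_monotoneOn isOpen_Ioo hm hxI hdx
    have hdg : δ / (b α - a α) < deriv (h α) x := by
      have := hxS.2.2
      rwa [abs_of_nonneg hd0] at this
    have htan : deriv (h α) x ≤ slope (h α) x y :=
      (hconv α).deriv_le_slope hxI hyI hxlt hdx
    rw [slope_def_field] at htan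
    have hgrow : δ / (b α - a α) * (y - x) < h α y - h α x := by
      rw [← lt_div_iff₀ (by linarith)]
      exact hdg.trans_le htan
    have hlow : δ * η' / 2 < h α y - h α x := by
      calc δ * η' / 2 = δ / (b α - a α) * (η' / 2 * (b α - a α)) := hcL.symm
        _ < δ / (b α - a α) * (y - x) := by
            apply mul_lt_mul_of_pos_left (by linarith) (by positivity)
        _ < h α y - h α x := hgrow
    have := le_abs_self (h α y - h α x)
    linarith
  · have hdy : DifferentiableAt ℝ (h α) y :=
      (hdiff α y hyI).differentiableAt (isOpen_Ioo.mem_nhds hyI)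
    have hd0 : deriv (h α) y ≤ 0 := deriv_nonpos_of_antitoneOn isOpen_Ioo hm hyI hdy
    have hdg : δ / (b α - a α) < -deriv (h α) y := by
      have := hyS.2.2
      rwa [abs_of_nonpos hd0] at this
    have htan : slope (h α) x y ≤ deriv (h α) y :=
      (hconv α).slope_le_deriv hxI hyI hxlt hdy
    rw [slope_def_field] at htan
    have hgrow : δ / (b α - a α) * (y - x) < h α x - h α y := by
      have h5 : h α y - h α x ≤ deriv (h α) y * (y - x) := by
        rw [div_le_iff₀ (by linarith)] at htan
        linarith
      nlinarith
    have hlow : δ * η' / 2 < h α x - h α y := by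
      calc δ * η' / 2 = δ / (b α - a α) * (η' / 2 * (b α - a α)) := hcL.symm
        _ < δ / (b α - a α) * (y - x) := by
            apply mul_lt_mul_of_pos_left (by linarith) (by positivity)
        _ < h α x - h α y := hgrow
    have := neg_abs_le (h α y - h α x)
    linarith
end
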